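/- arXiv:1910.10571 — 8 statements merged into one kernel-verified Lean document; each statement's English description precedes it below -/
import Mathlib

section
/- Let m ≥ 1 be an integer, let q and k be reals with 2 ≤ q ≤ k, let r ∈ ℝ^m have nonnegative entries, and let ν > 0 and β ≥ 1 be reals. Suppose Δ̃ ∈ ℝ^m satisfies ∑_{e=1}^m r_e Δ̃_e² + (1/2)(ν/m)^{1−q/k} ‖Δ̃‖_q^q ≤ βν. Set α = (1/(16β))·m^{−(k/(k−1))(1/q−1/k)}. Then 2∑_{e=1}^m r_e (αΔ̃_e)² + ‖αΔ̃‖_k^k ≤ αν/4. -/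
open Finset

/-- Auxiliary: for nonnegative terms and exponent `t ≥ 1`,
`∑ aᵢ^t ≤ (∑ aᵢ)^t`. -/
lemma aux_sum_rpow_le {ι : Type*} (s : Finset ι) (a : ι → ℝ)
    (ha : ∀ i ∈ s, 0 ≤ a i) {t : ℝ} (ht : 1 ≤ t) :
    ∑ i ∈ s, a i ^ t ≤ (∑ i ∈ s, a i) ^ t := by
  have ht0 : (0:ℝ) < t := lt_of_lt_of_le one_pos ht
  set S := ∑ i ∈ s, a i with hS
  have hS0 : 0 ≤ S := Finset.sum_nonneg ha
  rcases hS0.eq_or_lt with h0 | hSpos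
  · have hall : ∀ i ∈ s, a i = 0 :=
      (Finset.sum_eq_zero_iff_of_nonneg ha).1 h0.symm
    have : ∑ i ∈ s, a i ^ t = 0 := by
      apply Finset.sum_eq_zero
      intro i hi
      rw [hall i hi, Real.zero_rpow (ne_of_gt ht0)]
    rw [this, ← h0, Real.zero_rpow (ne_of_gt ht0)]
  · calc ∑ i ∈ s, a i ^ t ≤ ∑ i ∈ s, S ^ (t - 1) * a i := by
          apply Finset.sum_le_sum
          intro i hi
          rcases (ha i hi).eq_or_lt with h0 | hpos
          · rw [← h0, Real.zero_rpow (ne_of_gt ht0), mul_zero]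
          · have heq : a i ^ t = a i ^ (t - 1) * a i := by
              rw [← Real.rpow_add_one (ne_of_gt hpos) (t-1), sub_add_cancel]
            rw [heq]
            apply mul_le_mul_of_nonneg_right _ (ha i hi)
            exact Real.rpow_le_rpow (ha i hi) (Finset.single_le_sum ha hi) (by linarith)
      _ = S ^ (t - 1) * S := by rw [← Finset.mul_sum]
      _ = S ^ t := by
          rw [← Real.rpow_add_one (ne_of_gt hSpos) (t-1), sub_add_cancel]

/-- Lemma 3.1, ApproxLargep, conclusion.
`‖x‖_p^p` is formalized as `∑ e, |x e| ^ p` (real power). -/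
theorem stmt_0 {m : ℕ} (hm : 1 ≤ m) {q k : ℝ} (hq : 2 ≤ q) (hqk : q ≤ k)
    (r Δ : Fin m → ℝ) (hr : ∀ e, 0 ≤ r e) {ν β α : ℝ} (hν : 0 < ν) (hβ : 1 ≤ β)
    (hα : α = 1 / (16 * β) * (m : ℝ) ^ (-(k / (k - 1)) * (1 / q - 1 / k)))
    (hΔ : (∑ e, r e * Δ e ^ 2) + 1 / 2 * ((ν / (m : ℝ)) ^ (1 - q / k)) * (∑ e, |Δ e| ^ q)
        ≤ β * ν) :
    2 * (∑ e, r e * (α * Δ e) ^ 2) + (∑ e, |α * Δ e| ^ k) ≤ α * ν / 4 := by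
  -- basic positivity facts
  have hβ0 : (0:ℝ) < β := lt_of_lt_of_le one_pos hβ
  have hk2 : (2:ℝ) ≤ k := le_trans hq hqk
  have hq0 : (0:ℝ) < q := by linarith
  have hk0 : (0:ℝ) < k := by linarith
  have hk1 : (1:ℝ) < k := by linarith
  have hk1' : k - 1 ≠ 0 := by intro h; linarith [sub_eq_zero.1 h]
  have hM0 : (0:ℝ) < (m:ℝ) := by exact_mod_cast Nat.pos_of_ne_zero (by omega)
  have hM1 : (1:ℝ) ≤ (m:ℝ) := by exact_mod_cast hm
  set M : ℝ := (m : ℝ) with hMdef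
  set c : ℝ := k / (k - 1) * (1 / q - 1 / k) with hc
  have hc0 : 0 ≤ c := by
    apply mul_nonneg (div_nonneg hk0.le (by linarith))
    have : 1 / k ≤ 1 / q := one_div_le_one_div_of_le hq0 hqk
    linarith
  have hαval : α = 1 / (16 * β) * M ^ (-c) := by
    rw [hα, show -(k / (k - 1)) * (1 / q - 1 / k) = -c by rw [hc]; ring]
  have hα0 : 0 < α := by
    rw [hαval]; positivity
  -- notation
  set R : ℝ := ∑ e, r e * Δ e ^ 2 with hR
  set Q : ℝ := ∑ e, |Δ e| ^ q with hQ
  have hR0 : 0 ≤ R := Finset.sum_nonneg fun e _ => mul_nonneg (hr e) (sq_nonneg _)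
  have hQ0 : 0 ≤ Q := Finset.sum_nonneg fun e _ => Real.rpow_nonneg (abs_nonneg _) _
  set s : ℝ := 1 - q / k with hs
  have hνM : (0:ℝ) < ν / M := div_pos hν hM0
  have hMν : (0:ℝ) < M / ν := div_pos hM0 hν
  have hsν : 0 < (ν / M) ^ s := Real.rpow_pos_of_pos hνM s
  have hsν' : 0 < (M / ν) ^ s := Real.rpow_pos_of_pos hMν s
  -- bounds from the hypothesis
  have hRb : R ≤ β * ν := by
    have : 0 ≤ 1 / 2 * ((ν / M) ^ s) * Q := by positivity
    linarith
  have hQb : Q ≤ 2 * β * ν * (M / ν) ^ s := by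
    have h1 : 1 / 2 * ((ν / M) ^ s) * Q ≤ β * ν := by linarith
    have h2 : (ν / M) ^ s * (M / ν) ^ s = 1 := by
      rw [← Real.mul_rpow (le_of_lt hνM) (le_of_lt hMν)]
      rw [div_mul_div_comm]
      rw [show ν * M / (M * ν) = 1 by rw [mul_comm]; exact div_self (by positivity)]
      exact Real.one_rpow s
    nlinarith [mul_le_mul_of_nonneg_right h1 hsν'.le]
  -- the q→k norm comparison
  set t : ℝ := k / q with htdef
  have ht1 : 1 ≤ t := (one_le_div hq0).2 hqk
  have hKQ : (∑ e, |Δ e| ^ k) ≤ Q ^ t := by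
    have heq : ∀ e : Fin m, |Δ e| ^ k = (|Δ e| ^ q) ^ t := by
      intro e
      rw [← Real.rpow_mul (abs_nonneg _)]
      congr 1
      rw [htdef, mul_comm, div_mul_cancel₀ k hq0.ne']
    calc (∑ e, |Δ e| ^ k) = ∑ e, (|Δ e| ^ q) ^ t := by
          exact Finset.sum_congr rfl fun e _ => heq e
      _ ≤ (∑ e, |Δ e| ^ q) ^ t :=
          aux_sum_rpow_le _ _ (fun e _ => Real.rpow_nonneg (abs_nonneg _) _) ht1
  -- bound Q^t
  have hst : s * t = t - 1 := by
    rw [hs, htdef]; field_simp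
  have hexp : (2 * β * ν * (M / ν) ^ s) ^ t = (2 * β) ^ t * ν * M ^ (t - 1) := by
    rw [Real.mul_rpow (by positivity) hsν'.le,
        Real.mul_rpow (by positivity) hν.le,
        ← Real.rpow_mul hMν.le, hst,
        Real.div_rpow hM0.le hν.le]
    have hν' : ν ^ t = ν ^ (t - 1) * ν := by
      rw [← Real.rpow_add_one hν.ne' (t-1), sub_add_cancel]
    have hν2 : (0:ℝ) < ν ^ (t - 1) := Real.rpow_pos_of_pos hν _
    rw [hν']
    field_simp
  have hQtb : Q ^ t ≤ (2 * β) ^ t * ν * M ^ (t - 1) := by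
    rw [← hexp]
    exact Real.rpow_le_rpow hQ0 hQb (by linarith)
  -- rewrite the goal
  have hG1 : (∑ e, r e * (α * Δ e) ^ 2) = α ^ 2 * R := by
    rw [hR, Finset.mul_sum]
    exact Finset.sum_congr rfl fun e _ => by ring
  have hG2 : (∑ e, |α * Δ e| ^ k) = α ^ k * ∑ e, |Δ e| ^ k := by
    rw [Finset.mul_sum]
    refine Finset.sum_congr rfl fun e _ => ?_
    rw [abs_mul, abs_of_pos hα0, Real.mul_rpow hα0.le (abs_nonneg _)]
  have hαk_nn : 0 ≤ α ^ k := Real.rpow_nonneg hα0.le k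
  -- part A : 2 α² R ≤ αν/8
  have h16 : α * (16 * β) ≤ 1 := by
    have hle : M ^ (-c) ≤ 1 :=
      Real.rpow_le_one_of_one_le_of_nonpos hM1 (by linarith)
    calc α * (16 * β) = M ^ (-c) := by rw [hαval]; field_simp
      _ ≤ 1 := hle
  have hpartA : 2 * (α ^ 2 * (β * ν)) ≤ α * ν / 8 := by
    have heq : 2 * (α ^ 2 * (β * ν)) = (α * (16 * β)) * (α * ν) / 8 := by ring
    have hmul := mul_le_mul_of_nonneg_right h16 (mul_pos hα0 hν).le
    rw [heq]
    linarith
  -- part B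
  have hαk : α ^ k = α ^ (k - 1) * α := by
    rw [← Real.rpow_add_one hα0.ne' (k-1), sub_add_cancel]
  have hck : -c * (k - 1) = 1 - t := by
    rw [hc, htdef]; field_simp; ring
  have hAM : α ^ (k - 1) * M ^ (t - 1) = (1 / (16 * β)) ^ (k - 1) := by
    rw [hαval, Real.mul_rpow (by positivity) (Real.rpow_nonneg hM0.le _),
        ← Real.rpow_mul hM0.le, hck, mul_assoc, ← Real.rpow_add hM0]
    norm_num
  have hkey : (2 * β) ^ t ≤ (1 / 8) * (16 * β) ^ (k - 1) := by
    have htk : t ≤ k - 1 := by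
      have hmm : (k - 1) * 2 ≤ (k - 1) * q :=
        mul_le_mul_of_nonneg_left hq (by linarith)
      rw [htdef, div_le_iff₀ hq0]
      linarith
    have h1 : (2 * β) ^ t ≤ (2 * β) ^ (k - 1) :=
      Real.rpow_le_rpow_of_exponent_le (by linarith) htk
    have h2 : (16 * β) ^ (k - 1) = (8:ℝ) ^ (k - 1) * (2 * β) ^ (k - 1) := by
      rw [← Real.mul_rpow (by norm_num) (by positivity)]
      congr 1; ring
    have h3 : (8:ℝ) ≤ (8:ℝ) ^ (k - 1) := by
      calc (8:ℝ) = (8:ℝ) ^ (1:ℝ) := (Real.rpow_one 8).symm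
        _ ≤ (8:ℝ) ^ (k - 1) :=
          Real.rpow_le_rpow_of_exponent_le (by norm_num) (by linarith)
    have nn : 0 ≤ (2 * β) ^ (k - 1) :=
      Real.rpow_nonneg (by linarith) (k - 1)
    have h4 : 8 * (2 * β) ^ (k - 1) ≤ (8:ℝ) ^ (k - 1) * (2 * β) ^ (k - 1) :=
      mul_le_mul_of_nonneg_right h3 nn
    calc (2 * β) ^ t ≤ (2 * β) ^ (k - 1) := h1
      _ = (1 / 8) * (8 * (2 * β) ^ (k - 1)) := by ring
      _ ≤ (1 / 8) * ((8:ℝ) ^ (k - 1) * (2 * β) ^ (k - 1)) := by linarith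
      _ = (1 / 8) * (16 * β) ^ (k - 1) := by rw [h2]
  have hinv : (1 / (16 * β)) ^ (k - 1) * (16 * β) ^ (k - 1) = 1 := by
    rw [← Real.mul_rpow (by positivity) (by positivity),
        show (1 / (16 * β)) * (16 * β) = 1 by field_simp]
    exact Real.one_rpow _
  have hpartB : α ^ k * ((2 * β) ^ t * ν * M ^ (t - 1)) ≤ α * ν / 8 := by
    rw [hαk]
    calc α ^ (k-1) * α * ((2 * β) ^ t * ν * M ^ (t - 1))
        = (α * ν) * ((2 * β) ^ t * (α ^ (k-1) * M ^ (t - 1))) := by ring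
      _ = (α * ν) * ((2 * β) ^ t * (1 / (16 * β)) ^ (k - 1)) := by rw [hAM]
      _ ≤ (α * ν) * (1 / 8) := by
          apply mul_le_mul_of_nonneg_left _ (by positivity)
          calc (2 * β) ^ t * (1 / (16 * β)) ^ (k - 1)
              ≤ ((1 / 8) * (16 * β) ^ (k - 1)) * (1 / (16 * β)) ^ (k - 1) :=
                mul_le_mul_of_nonneg_right hkey (Real.rpow_nonneg (by positivity) _)
            _ = (1 / 8) * ((1 / (16 * β)) ^ (k - 1) * (16 * β) ^ (k - 1)) := by ring
            _ = 1 / 8 := by rw [hinv]; ring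
      _ = α * ν / 8 := by ring
  -- put everything together
  rw [hG1, hG2]
  have hK := le_trans hKQ hQtb
  have h1 : α ^ k * (∑ e, |Δ e| ^ k) ≤ α ^ k * ((2 * β) ^ t * ν * M ^ (t - 1)) :=
    mul_le_mul_of_nonneg_left hK hαk_nn
  have h2' : α ^ 2 * R ≤ α ^ 2 * (β * ν) :=
    mul_le_mul_of_nonneg_left hRb (sq_nonneg α)
  have h2 : 2 * (α ^ 2 * R) ≤ 2 * (α ^ 2 * (β * ν)) := by linarith
  linarith
end

section
/- Let m ≥ 1 be an integer, 2 ≤ q ≤ k reals, A ∈ ℝ^{n×m}, g ∈ ℝ^m, r ∈ ℝ^m with nonnegative entries, and ν > 0, β ≥ 1 reals. Suppose Δ̃ ∈ ℝ^m satisfies AΔ̃ = 0, g^⊤Δ̃ = ν/2, and ∑_e r_e Δ̃_e² + (1/2)(ν/m)^{1−q/k}‖Δ̃‖_q^q ≤ βν. Set α = (1/(16β))·m^{−(k/(k−1))(1/q−1/k)}. Then res_k(αΔ̃) ≥ αν/4; consequently, if res_k(Δ) ≤ ν for every Δ with AΔ = 0, then res_k(αΔ̃) ≥ (1/(64β))·m^{−(k/(k−1))(1/q−1/k)}·res_k(Δ)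 for every Δ with AΔ = 0. -/
open Finset

lemma sum_rpow_le_rpow_sum' {m : ℕ} (f : Fin m → ℝ) (hf : ∀ e, 0 ≤ f e) {p : ℝ}
    (hp : 1 ≤ p) : ∑ e, f e ^ p ≤ (∑ e, f e) ^ p := by
  have hT : ∀ e : Fin m, f e ≤ ∑ e, f e := fun e =>
    Finset.single_le_sum (fun i _ => hf i) (Finset.mem_univ e)
  have hT0 : 0 ≤ ∑ e, f e := Finset.sum_nonneg fun i _ => hf i
  have hps : (1 : ℝ) + (p - 1) = p := by ring
  have hpne : (1 : ℝ) + (p - 1) ≠ 0 := by rw [hps]; linarith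
  calc ∑ e, f e ^ p ≤ ∑ e, f e * (∑ e, f e) ^ (p - 1) := by
        apply Finset.sum_le_sum
        intro e _
        have : f e ^ p = f e * f e ^ (p - 1) := by
          rw [show f e ^ p = f e ^ (1 + (p - 1)) by rw [hps],
            Real.rpow_add' (hf e) hpne, Real.rpow_one]
        rw [this]
        exact mul_le_mul_of_nonneg_left
          (Real.rpow_le_rpow (hf e) (hT e) (by linarith)) (hf e)
    _ = (∑ e, f e) * (∑ e, f e) ^ (p - 1) := by rw [← Finset.sum_mul]
    _ = (∑ e, f e) ^ p := by
        rw [show (∑ e, f e) ^ p = (∑ e, f e) ^ (1 + (p - 1)) by rw [hps],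
          Real.rpow_add' hT0 hpne, Real.rpow_one]

/-- The residual objective `res_p(Δ) = g^⊤Δ − 2∑_e r_e Δ_e² − ‖Δ‖_p^p`. -/
noncomputable def res {m : ℕ} (g r : Fin m → ℝ) (p : ℝ) (Δ : Fin m → ℝ) : ℝ :=
  (∑ e, g e * Δ e) - 2 * (∑ e, r e * Δ e ^ 2) - ∑ e, |Δ e| ^ p

/-- Corollary 3.2, ApproxToRes, case `q ≤ k`. -/
theorem stmt_1 {n m : ℕ} (hm : 1 ≤ m) {q k : ℝ} (hq : 2 ≤ q) (hqk : q ≤ k)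
    (A : Matrix (Fin n) (Fin m) ℝ) (g r Δt : Fin m → ℝ) (hr : ∀ e, 0 ≤ r e)
    {ν β α : ℝ} (hν : 0 < ν) (hβ : 1 ≤ β)
    (hα : α = 1 / (16 * β) * (m : ℝ) ^ (-(k / (k - 1)) * (1 / q - 1 / k)))
    (hAΔ : A.mulVec Δt = 0) (hgΔ : (∑ e, g e * Δt e) = ν / 2)
    (hΔ : (∑ e, r e * Δt e ^ 2) + 1 / 2 * ((ν / (m : ℝ)) ^ (1 - q / k)) * (∑ e, |Δt e| ^ q)
        ≤ β * ν) :
    res g r k (fun e => α * Δt e) ≥ α * ν / 4 ∧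
      ((∀ Δ, A.mulVec Δ = 0 → res g r k Δ ≤ ν) →
        ∀ Δ, A.mulVec Δ = 0 →
          res g r k (fun e => α * Δt e)
            ≥ 1 / (64 * β) * (m : ℝ) ^ (-(k / (k - 1)) * (1 / q - 1 / k)) * res g r k Δ) := by
  -- basic positivity facts
  set E : ℝ := -(k / (k - 1)) * (1 / q - 1 / k) with hE
  set S : ℝ := ∑ e, r e * Δt e ^ 2 with hSdef
  set Tq : ℝ := ∑ e, |Δt e| ^ q with hTqdef
  set Tk : ℝ := ∑ e, |Δt e| ^ k with hTkdef
  have hβ0 : (0:ℝ) < β := by linarith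
  have hk2 : (2:ℝ) ≤ k := le_trans hq hqk
  have hq0 : (0:ℝ) < q := by linarith
  have hk0 : (0:ℝ) < k := by linarith
  have hk1 : (0:ℝ) < k - 1 := by linarith
  have hm1 : (1:ℝ) ≤ (m:ℝ) := by exact_mod_cast hm
  have hm0 : (0:ℝ) < (m:ℝ) := by linarith
  have hEneg : E ≤ 0 := by
    apply mul_nonpos_of_nonpos_of_nonneg
    · simp only [neg_nonpos]
      positivity
    · have : 1 / k ≤ 1 / q := by
        apply one_div_le_one_div_of_le hq0 hqk
      linarith
  have hM0 : (0:ℝ) < (m:ℝ) ^ E := Real.rpow_pos_of_pos hm0 E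
  have hM1 : (m:ℝ) ^ E ≤ 1 := Real.rpow_le_one_of_one_le_of_nonpos hm1 hEneg
  have hα0 : 0 < α := by rw [hα]; positivity
  have hαle : α ≤ 1 / (16 * β) := by
    rw [hα]
    calc 1 / (16 * β) * (m:ℝ) ^ E ≤ 1 / (16 * β) * 1 :=
          mul_le_mul_of_nonneg_left hM1 (by positivity)
      _ = 1 / (16 * β) := by ring
  have hS0 : 0 ≤ S := Finset.sum_nonneg fun e _ => mul_nonneg (hr e) (sq_nonneg _)
  have hTq0 : 0 ≤ Tq := Finset.sum_nonneg fun e _ => Real.rpow_nonneg (abs_nonneg _) _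
  have hTk0 : 0 ≤ Tk := Finset.sum_nonneg fun e _ => Real.rpow_nonneg (abs_nonneg _) _
  have hνm0 : (0:ℝ) < (ν / (m:ℝ)) ^ (1 - q / k) := Real.rpow_pos_of_pos (by positivity) _
  -- S ≤ β ν
  have hSβ : S ≤ β * ν := by nlinarith [mul_nonneg hνm0.le hTq0]
  -- Tq bound
  have hTqb : Tq ≤ 2 * β * ν ^ (q / k) * (m:ℝ) ^ (1 - q / k) := by
    have hsplit : (ν / (m:ℝ)) ^ (1 - q / k) = ν ^ (1 - q / k) / (m:ℝ) ^ (1 - q / k) :=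
      Real.div_rpow hν.le hm0.le _
    have hν1 : ν ^ (1 - q / k) * ν ^ (q / k) = ν := by
      rw [← Real.rpow_add hν]
      norm_num
    have hmm : (0:ℝ) < (m:ℝ) ^ (1 - q / k) := Real.rpow_pos_of_pos hm0 _
    have hc : (ν / (m:ℝ)) ^ (1 - q / k) * (2 * β * ν ^ (q / k) * (m:ℝ) ^ (1 - q / k))
        = 2 * β * ν := by
      rw [hsplit]
      rw [show ν ^ (1 - q / k) / (m:ℝ) ^ (1 - q / k)
            * (2 * β * ν ^ (q / k) * (m:ℝ) ^ (1 - q / k))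
          = 2 * β * (ν ^ (1 - q / k) * ν ^ (q / k)) from by field_simp, hν1]
    have h1 : (ν / (m:ℝ)) ^ (1 - q / k) * Tq
        ≤ (ν / (m:ℝ)) ^ (1 - q / k) * (2 * β * ν ^ (q / k) * (m:ℝ) ^ (1 - q / k)) := by
      rw [hc]; linarith
    exact le_of_mul_le_mul_left h1 hνm0
  -- Tk ≤ Tq^(k/q)
  have hkq1 : (1:ℝ) ≤ k / q := (one_le_div hq0).mpr hqk
  have hTkTq : Tk ≤ Tq ^ (k / q) := by
    have heq : ∀ e : Fin m, |Δt e| ^ k = (|Δt e| ^ q) ^ (k / q) := by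
      intro e
      rw [← Real.rpow_mul (abs_nonneg _)]
      congr 1
      field_simp
    calc Tk = ∑ e, (|Δt e| ^ q) ^ (k / q) := Finset.sum_congr rfl fun e _ => heq e
      _ ≤ Tq ^ (k / q) :=
          sum_rpow_le_rpow_sum' _ (fun e => Real.rpow_nonneg (abs_nonneg _) _) hkq1
  -- the key scalar bound: α^(k-1) * Tk ≤ ν / 8
  have hαk1 : α ^ (k - 1) = (1 / (16 * β)) ^ (k - 1) * (m:ℝ) ^ (1 - k / q) := by
    have hq' : q ≠ 0 := ne_of_gt hq0
    have hk' : k ≠ 0 := ne_of_gt hk0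
    have hk1' : k - 1 ≠ 0 := ne_of_gt hk1
    have hexp : E * (k - 1) = 1 - k / q := by
      rw [hE]; field_simp; ring
    rw [hα, Real.mul_rpow (by positivity) hM0.le, ← Real.rpow_mul hm0.le, hexp]
  have hTqpow : Tq ^ (k / q) ≤ (2 * β) ^ (k / q) * ν * (m:ℝ) ^ (k / q - 1) := by
    have h := Real.rpow_le_rpow hTq0 hTqb (by linarith : (0:ℝ) ≤ k / q)
    refine h.trans_eq ?_
    rw [Real.mul_rpow (by positivity) (Real.rpow_nonneg hm0.le _),
        Real.mul_rpow (by positivity) (Real.rpow_nonneg hν.le _),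
        ← Real.rpow_mul hν.le, ← Real.rpow_mul hm0.le]
    have hq' : q ≠ 0 := ne_of_gt hq0
    have hk' : k ≠ 0 := ne_of_gt hk0
    have e1 : q / k * (k / q) = 1 := by field_simp
    have e2 : (1 - q / k) * (k / q) = k / q - 1 := by field_simp
    rw [e1, e2, Real.rpow_one]
  have hscalar : (1 / (16 * β)) ^ (k - 1) * (2 * β) ^ (k / q) ≤ 1 / 8 := by
    have h1 : (2 * β) ^ (k / q) ≤ (2 * β) ^ (k - 1) := by
      apply Real.rpow_le_rpow_of_exponent_le (by linarith)
      have : k / q ≤ k / 2 := div_le_div_of_nonneg_left hk0.le (by norm_num) hq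
      linarith
    have h2 : (1 / (16 * β)) ^ (k - 1) * (2 * β) ^ (k - 1) = (1/8 : ℝ) ^ (k - 1) := by
      rw [← Real.mul_rpow (by positivity) (by positivity)]
      congr 1
      field_simp
      ring
    have h3 : (1/8 : ℝ) ^ (k - 1) ≤ (1/8 : ℝ) ^ (1:ℝ) :=
      Real.rpow_le_rpow_of_exponent_ge (by norm_num) (by norm_num) (by linarith)
    have h4 : (0:ℝ) < (1 / (16 * β)) ^ (k - 1) := Real.rpow_pos_of_pos (by positivity) _
    calc (1 / (16 * β)) ^ (k - 1) * (2 * β) ^ (k / q)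
        ≤ (1 / (16 * β)) ^ (k - 1) * (2 * β) ^ (k - 1) :=
          mul_le_mul_of_nonneg_left h1 h4.le
      _ = (1/8 : ℝ) ^ (k - 1) := h2
      _ ≤ 1 / 8 := by rw [Real.rpow_one] at h3; exact h3
  have hmcancel : (m:ℝ) ^ (1 - k / q) * (m:ℝ) ^ (k / q - 1) = 1 := by
    rw [← Real.rpow_add hm0]
    norm_num
  have hkey : α ^ (k - 1) * Tk ≤ ν / 8 := by
    have hαk1pos : (0:ℝ) < α ^ (k-1) := Real.rpow_pos_of_pos hα0 _
    calc α ^ (k - 1) * Tk ≤ α ^ (k - 1) * ((2 * β) ^ (k / q) * ν * (m:ℝ) ^ (k / q - 1)) := by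
          apply mul_le_mul_of_nonneg_left _ hαk1pos.le
          exact hTkTq.trans hTqpow
      _ = ((1 / (16 * β)) ^ (k - 1) * (2 * β) ^ (k / q)) * ν
            * ((m:ℝ) ^ (1 - k / q) * (m:ℝ) ^ (k / q - 1)) := by
          rw [hαk1]; ring
      _ = ((1 / (16 * β)) ^ (k - 1) * (2 * β) ^ (k / q)) * ν := by rw [hmcancel]; ring
      _ ≤ 1 / 8 * ν := mul_le_mul_of_nonneg_right hscalar hν.le
      _ = ν / 8 := by ring
  -- α^k Tk ≤ α ν / 8
  have hαk : α ^ k = α * α ^ (k - 1) := by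
    nth_rewrite 1 [show k = 1 + (k - 1) by ring]
    rw [Real.rpow_add hα0, Real.rpow_one]
  have hB : α ^ k * Tk ≤ α * ν / 8 := by
    rw [hαk, mul_assoc]
    have := mul_le_mul_of_nonneg_left hkey hα0.le
    linarith
  -- 2 α² S ≤ α ν / 8
  have hA2 : α ^ 2 * S ≤ α * ν / 16 := by
    have h1 : α * S ≤ 1 / (16 * β) * (β * ν) :=
      mul_le_mul hαle hSβ hS0 (by positivity)
    have h2 : 1 / (16 * β) * (β * ν) = ν / 16 := by field_simp
    rw [h2] at h1
    have := mul_le_mul_of_nonneg_left h1 hα0.le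
    calc α ^ 2 * S = α * (α * S) := by ring
      _ ≤ α * (ν / 16) := this
      _ = α * ν / 16 := by ring
  -- expand res
  have hres : res g r k (fun e => α * Δt e) = α * (ν / 2) - 2 * (α ^ 2 * S) - α ^ k * Tk := by
    unfold res
    have h1 : ∑ e, g e * (α * Δt e) = α * (ν / 2) := by
      rw [← hgΔ, Finset.mul_sum]
      exact Finset.sum_congr rfl fun e _ => by ring
    have h2 : ∑ e, r e * (α * Δt e) ^ 2 = α ^ 2 * S := by
      rw [hSdef, Finset.mul_sum]
      exact Finset.sum_congr rfl fun e _ => by ring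
    have h3 : ∑ e, |α * Δt e| ^ k = α ^ k * Tk := by
      rw [hTkdef, Finset.mul_sum]
      refine Finset.sum_congr rfl fun e _ => ?_
      rw [abs_mul, abs_of_pos hα0, Real.mul_rpow hα0.le (abs_nonneg _)]
    rw [h1, h2, h3]
  have hmain : res g r k (fun e => α * Δt e) ≥ α * ν / 4 := by
    rw [hres]; linarith
  refine ⟨hmain, fun hbound Δ hAΔ' => ?_⟩
  have hresν := hbound Δ hAΔ'
  have hC0 : (0:ℝ) ≤ 1 / (64 * β) * (m:ℝ) ^ E := by positivity
  calc res g r k (fun e => α * Δt e) ≥ α * ν / 4 := hmain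
    _ = 1 / (64 * β) * (m:ℝ) ^ E * ν := by rw [hα]; ring
    _ ≥ 1 / (64 * β) * (m:ℝ) ^ E * res g r k Δ :=
        mul_le_mul_of_nonneg_left hresν hC0
end

section
/- Let m ≥ 1 be an integer, let k and q be reals with 2 ≤ k ≤ q, let A ∈ ℝ^{n×m}, g ∈ ℝ^m, r ∈ ℝ^m with nonnegative entries, and ν > 0, β ≥ 1 reals. Suppose Δ̃ ∈ ℝ^m satisfies AΔ̃ = 0, g^⊤Δ̃ = ν/2, and ∑_e r_e Δ̃_e² + (ν^{1−q/k}/2^{q/k})‖Δ̃‖_q^q ≤ βν. Set α = (1/(16β))·m^{−(k/(k−1))(1/k−1/q)}. Then res_k(αΔ̃) ≥ αν/4; consequently, if res_k(Δ) ≤ ν for every Δ with AΔ = 0, then res_k(αΔ̃) ≥ (1/(64β))·m^{−(k/(k−1))(1/k−1/q)}·res_k(Δ) for every Δ with AΔ = 0. -/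
lemma sum_le_rpow_card {m : ℕ} (hm : 1 ≤ m) (z : Fin m → ℝ) (hz : ∀ i, 0 ≤ z i) {t : ℝ}
    (ht : 1 ≤ t) :
    ∑ i, z i ≤ (m : ℝ) ^ (1 - 1/t) * (∑ i, z i ^ t) ^ (1/t) := by
  have hm0 : (0:ℝ) < m := by exact_mod_cast Nat.lt_of_lt_of_le Nat.zero_lt_one hm
  have ht0 : (0:ℝ) < t := lt_of_lt_of_le one_pos ht
  have key := Real.rpow_arith_mean_le_arith_mean_rpow Finset.univ (fun _ => 1/(m:ℝ)) z
    (fun i _ => by positivity) (by simp [Finset.sum_const, Finset.card_univ]; field_simp)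
    (fun i _ => hz i) ht
  simp only [← Finset.mul_sum] at key
  have hS : 0 ≤ ∑ i, z i := Finset.sum_nonneg fun i _ => hz i
  have hT : 0 ≤ ∑ i, z i ^ t := Finset.sum_nonneg fun i _ => Real.rpow_nonneg (hz i) t
  have h2 : ((1/(m:ℝ)) * ∑ i, z i) ≤ ((1/(m:ℝ)) * ∑ i, z i ^ t) ^ (1/t) := by
    have h3 := Real.rpow_le_rpow (Real.rpow_nonneg (by positivity) t) key
      (by positivity : (0:ℝ) ≤ 1/t)
    rwa [← Real.rpow_mul (by positivity), mul_one_div_cancel ht0.ne', Real.rpow_one] at h3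
  have h4 : ((1/(m:ℝ)) * ∑ i, z i ^ t) ^ (1/t)
      = (1/(m:ℝ)) ^ (1/t) * (∑ i, z i ^ t) ^ (1/t) :=
    Real.mul_rpow (by positivity) hT
  have h5 : (m:ℝ) * ((1/(m:ℝ)) ^ (1/t)) = (m:ℝ) ^ (1 - 1/t) := by
    rw [one_div, ← Real.rpow_neg_one (m:ℝ), ← Real.rpow_mul (le_of_lt hm0)]
    nth_rewrite 1 [← Real.rpow_one (m:ℝ)]
    rw [← Real.rpow_add hm0]
    ring_nf
  calc ∑ i, z i = (m:ℝ) * ((1/(m:ℝ)) * ∑ i, z i) := by field_simp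
    _ ≤ (m:ℝ) * ((1/(m:ℝ)) * ∑ i, z i ^ t) ^ (1/t) :=
        mul_le_mul_of_nonneg_left h2 (le_of_lt hm0)
    _ = (m:ℝ) ^ (1 - 1/t) * (∑ i, z i ^ t) ^ (1/t) := by rw [h4, ← mul_assoc, h5]



set_option maxHeartbeats 1000000 in
/-- Lemma 3.3, ApproxSmallp, case `k ≤ q`. -/
theorem stmt_2 {n m : ℕ} (hm : 1 ≤ m) {k q : ℝ} (hk : 2 ≤ k) (hkq : k ≤ q)
    (A : Matrix (Fin n) (Fin m) ℝ) (g r Δt : Fin m → ℝ) (hr : ∀ e, 0 ≤ r e)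
    {ν β α : ℝ} (hν : 0 < ν) (hβ : 1 ≤ β)
    (hα : α = 1 / (16 * β) * (m : ℝ) ^ (-(k / (k - 1)) * (1 / k - 1 / q)))
    (hAΔ : A.mulVec Δt = 0) (hgΔ : (∑ e, g e * Δt e) = ν / 2)
    (hΔ : (∑ e, r e * Δt e ^ 2) + (ν ^ (1 - q / k) / (2 : ℝ) ^ (q / k)) * (∑ e, |Δt e| ^ q)
        ≤ β * ν) :
    res g r k (fun e => α * Δt e) ≥ α * ν / 4 ∧
      ((∀ Δ, A.mulVec Δ = 0 → res g r k Δ ≤ ν) →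
        ∀ Δ, A.mulVec Δ = 0 →
          res g r k (fun e => α * Δt e)
            ≥ 1 / (64 * β) * (m : ℝ) ^ (-(k / (k - 1)) * (1 / k - 1 / q)) * res g r k Δ) := by
  have hk0 : (0:ℝ) < k := by linarith
  have hk1 : (1:ℝ) < k := by linarith
  have hq0 : (0:ℝ) < q := by linarith
  have hβ0 : (0:ℝ) < β := by linarith
  have hm0 : (0:ℝ) < (m:ℝ) := by exact_mod_cast Nat.lt_of_lt_of_le Nat.zero_lt_one hm
  have hm1 : (1:ℝ) ≤ (m:ℝ) := by exact_mod_cast hm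
  have hkm1 : (0:ℝ) < k - 1 := by linarith
  have hE : -(k / (k - 1)) * (1 / k - 1 / q) ≤ 0 := by
    have h1 : 0 ≤ k / (k - 1) := by positivity
    have h2 : 1 / q ≤ 1 / k := one_div_le_one_div_of_le hk0 hkq
    nlinarith
  have hM0 : (0:ℝ) < (m:ℝ) ^ (-(k / (k - 1)) * (1 / k - 1 / q)) := Real.rpow_pos_of_pos hm0 _
  have hM1 : (m:ℝ) ^ (-(k / (k - 1)) * (1 / k - 1 / q)) ≤ 1 :=
    Real.rpow_le_one_of_one_le_of_nonpos hm1 hE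
  have hα0 : 0 < α := by rw [hα]; positivity
  have hαle : α ≤ 1 / (16 * β) := by
    rw [hα]
    nth_rewrite 2 [← mul_one (1 / (16 * β))]
    exact mul_le_mul_of_nonneg_left hM1 (by positivity)
  set S := ∑ e, r e * Δt e ^ 2 with hSdef
  set Q := ∑ e, |Δt e| ^ q with hQdef
  set K := ∑ e, |Δt e| ^ k with hKdef
  have hS0 : 0 ≤ S := Finset.sum_nonneg fun e _ => mul_nonneg (hr e) (sq_nonneg _)
  have hQ0 : 0 ≤ Q := Finset.sum_nonneg fun e _ => Real.rpow_nonneg (abs_nonneg _) _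
  have hK0 : 0 ≤ K := Finset.sum_nonneg fun e _ => Real.rpow_nonneg (abs_nonneg _) _
  have hc0 : (0:ℝ) < ν ^ (1 - q / k) / (2:ℝ) ^ (q / k) := by positivity
  have hSle : S ≤ β * ν := by nlinarith [mul_nonneg hc0.le hQ0]
  have hQle : Q ≤ β * (2:ℝ) ^ (q / k) * ν ^ (q / k) := by
    have hc : ν ^ (1 - q / k) / (2:ℝ) ^ (q / k) * (β * (2:ℝ) ^ (q / k) * ν ^ (q / k))
        = β * ν := by
      have hνsplit : ν ^ (1 - q / k) * ν ^ (q / k) = ν := by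
        rw [← Real.rpow_add hν]; norm_num
      have h2k : ((2:ℝ) ^ (q / k)) ≠ 0 := by positivity
      calc ν ^ (1 - q / k) / (2:ℝ) ^ (q / k) * (β * (2:ℝ) ^ (q / k) * ν ^ (q / k))
          = β * (ν ^ (1 - q / k) * ν ^ (q / k)) * ((2:ℝ) ^ (q / k) / (2:ℝ) ^ (q / k)) := by
            ring
        _ = β * ν := by rw [hνsplit, div_self h2k, mul_one]
    have h1 : ν ^ (1 - q / k) / (2:ℝ) ^ (q / k) * Q
        ≤ ν ^ (1 - q / k) / (2:ℝ) ^ (q / k) * (β * (2:ℝ) ^ (q / k) * ν ^ (q / k)) := by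
      rw [hc]; linarith
    exact le_of_mul_le_mul_left h1 hc0
  have ht : (1:ℝ) ≤ q / k := (one_le_div hk0).mpr hkq
  have hKle : K ≤ (m:ℝ) ^ (k * (1 / k - 1 / q)) * Q ^ (k / q) := by
    have h := sum_le_rpow_card hm (fun i => |Δt i| ^ k) (fun i => Real.rpow_nonneg (abs_nonneg _) _) ht
    have e1 : ∀ i : Fin m, ((|Δt i| ^ k) ^ (q / k)) = |Δt i| ^ q := by
      intro i
      rw [← Real.rpow_mul (abs_nonneg _)]
      congr 1
      field_simp
    have e2 : 1 - 1 / (q / k) = k * (1 / k - 1 / q) := by field_simp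
    have e3 : 1 / (q / k) = k / q := by rw [one_div_div]
    simp only [e1, e2, e3] at h
    rw [show k * (1 / k - 1 / q) = 1 - k / q from by field_simp]
    convert h using 2
  -- value of res at α • Δt
  have habs : ∀ e : Fin m, |α * Δt e| ^ k = α ^ k * |Δt e| ^ k := fun e => by
    rw [abs_mul, abs_of_pos hα0, Real.mul_rpow hα0.le (abs_nonneg _)]
  have h_res : res g r k (fun e => α * Δt e) = α * (ν / 2) - 2 * (α ^ 2 * S) - α ^ k * K := by
    unfold res
    have t1 : (∑ e, g e * (α * Δt e)) = α * (ν / 2) := by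
      rw [← hgΔ, Finset.mul_sum]
      exact Finset.sum_congr rfl fun e _ => by ring
    have t2 : (∑ e, r e * (α * Δt e) ^ 2) = α ^ 2 * S := by
      rw [hSdef, Finset.mul_sum]
      exact Finset.sum_congr rfl fun e _ => by ring
    have t3 : (∑ e, |α * Δt e| ^ k) = α ^ k * K := by
      rw [hKdef, Finset.mul_sum]
      exact Finset.sum_congr rfl fun e _ => habs e
    rw [t1, t2, t3]
  -- bound 1
  have hprod : α * S ≤ ν / 16 := by
    have h1 : α * S ≤ 1 / (16 * β) * (β * ν) :=
      mul_le_mul hαle hSle hS0 (by positivity)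
    have h2 : 1 / (16 * β) * (β * ν) = ν / 16 := by
      rw [div_mul_eq_mul_div, one_mul, mul_comm 16 β, ← div_div]
      rw [show β * ν / β = ν * (β / β) from by ring, div_self hβ0.ne', mul_one]
    rw [h2] at h1
    exact h1
  have hbound1 : 2 * (α ^ 2 * S) ≤ α * ν / 8 := by
    nlinarith [mul_le_mul_of_nonneg_left hprod hα0.le]
  -- bound 2
  have hαk : α ^ k = α * α ^ (k - 1) := by
    have h := Real.rpow_add hα0 1 (k - 1)
    rw [Real.rpow_one] at h
    rw [show (1:ℝ) + (k - 1) = k from by ring] at h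
    exact h
  have hQk : Q ^ (k / q) ≤ β ^ (k / q) * (2 * ν) := by
    have hRHS : (β * (2:ℝ) ^ (q / k) * ν ^ (q / k)) ^ (k / q) = β ^ (k / q) * (2 * ν) := by
      rw [Real.mul_rpow (by positivity) (by positivity),
        Real.mul_rpow (by positivity) (by positivity),
        ← Real.rpow_mul (by norm_num : (0:ℝ) ≤ 2), ← Real.rpow_mul hν.le]
      rw [show q / k * (k / q) = 1 from by field_simp, Real.rpow_one, Real.rpow_one]
      ring
    rw [← hRHS]
    exact Real.rpow_le_rpow hQ0 hQle (by positivity)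
  have step4 : α ^ (k - 1) * (m:ℝ) ^ (k * (1 / k - 1 / q)) = (1 / (16 * β)) ^ (k - 1) := by
    have hEk : (-(k / (k - 1)) * (1 / k - 1 / q)) * (k - 1) + k * (1 / k - 1 / q) = 0 := by
      field_simp
      ring
    rw [hα, Real.mul_rpow (by positivity) hM0.le, ← Real.rpow_mul hm0.le, mul_assoc,
      ← Real.rpow_add hm0, hEk, Real.rpow_zero, mul_one]
  have step5 : (1 / (16 * β)) ^ (k - 1) * β ^ (k / q) ≤ 1 / 16 := by
    have ha0 : (0:ℝ) < 1 / (16 * β) := by positivity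
    have ha1 : 1 / (16 * β) ≤ 1 := by
      rw [div_le_one (by positivity)]; linarith
    have h1 : (1 / (16 * β)) ^ (k - 1) ≤ 1 / (16 * β) := by
      have := Real.rpow_le_rpow_of_exponent_ge ha0 ha1 (by linarith : (1:ℝ) ≤ k - 1)
      rwa [Real.rpow_one] at this
    have h2 : β ^ (k / q) ≤ β := by
      have := Real.rpow_le_rpow_of_exponent_le hβ ((div_le_one hq0).mpr hkq)
      rwa [Real.rpow_one] at this
    have h3 : (1 / (16 * β)) ^ (k - 1) * β ^ (k / q) ≤ 1 / (16 * β) * β :=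
      mul_le_mul h1 h2 (Real.rpow_nonneg (by positivity) _) ha0.le
    have h4 : 1 / (16 * β) * β = 1 / 16 := by
      rw [div_mul_eq_mul_div, one_mul, mul_comm 16 β, ← div_div, div_self hβ0.ne']
    rw [h4] at h3
    exact h3
  have hbound2 : α ^ k * K ≤ α * ν / 8 := by
    have hαk0 : (0:ℝ) ≤ α ^ k := Real.rpow_nonneg hα0.le k
    calc α ^ k * K ≤ α ^ k * ((m:ℝ) ^ (k * (1 / k - 1 / q)) * Q ^ (k / q)) :=
          mul_le_mul_of_nonneg_left hKle hαk0
      _ ≤ α ^ k * ((m:ℝ) ^ (k * (1 / k - 1 / q)) * (β ^ (k / q) * (2 * ν))) := by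
          apply mul_le_mul_of_nonneg_left _ hαk0
          exact mul_le_mul_of_nonneg_left hQk (Real.rpow_nonneg hm0.le _)
      _ = α * ((α ^ (k - 1) * (m:ℝ) ^ (k * (1 / k - 1 / q))) * β ^ (k / q) * (2 * ν)) := by
          rw [hαk]; ring
      _ = α * ((1 / (16 * β)) ^ (k - 1) * β ^ (k / q) * (2 * ν)) := by rw [step4]
      _ ≤ α * (1 / 16 * (2 * ν)) := by
          apply mul_le_mul_of_nonneg_left _ hα0.le
          exact mul_le_mul_of_nonneg_right step5 (by positivity)
      _ = α * ν / 8 := by ring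
  have hmain : res g r k (fun e => α * Δt e) ≥ α * ν / 4 := by
    rw [h_res]; linarith
  refine ⟨hmain, ?_⟩
  intro hb Δ hΔ0
  have hrΔ := hb Δ hΔ0
  rw [show 1 / (64 * β) * (m : ℝ) ^ (-(k / (k - 1)) * (1 / k - 1 / q)) = α / 4 from by
    rw [hα]; ring]
  nlinarith [mul_le_mul_of_nonneg_left hrΔ (by positivity : (0:ℝ) ≤ α / 4)]
end

section
/- Let k ≥ 2 be real, A ∈ ℝ^{n×m}, g ∈ ℝ^m, r ∈ ℝ^m with nonnegative entries, and ν > 0. Suppose Δ* maximizes res_k(Δ) = g^⊤Δ − 2∑_e r_e Δ_e² − ‖Δ‖_k^k over {Δ ∈ ℝ^m : AΔ = 0}, and res_k(Δ*) ∈ (ν/2, ν]. Then there exists Δ ∈ ℝ^m with AΔ = 0, g^⊤Δ = ν/2, and 2∑_{e=1}^m r_e Δ_e² + ‖Δ‖_k^k ≤ ν. -/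
/-- Lemma B.3, Decision. -/
theorem stmt_5 {n m : ℕ} {k : ℝ} (hk : 2 ≤ k)
    (A : Matrix (Fin n) (Fin m) ℝ) (g r : Fin m → ℝ) (hr : ∀ e, 0 ≤ r e)
    {ν : ℝ} (hν : 0 < ν) (Δs : Fin m → ℝ) (hAs : A.mulVec Δs = 0)
    (hmax : ∀ Δ, A.mulVec Δ = 0 → res g r k Δ ≤ res g r k Δs)
    (hlo : ν / 2 < res g r k Δs) (hhi : res g r k Δs ≤ ν) :
    ∃ Δ : Fin m → ℝ, A.mulVec Δ = 0 ∧ (∑ e, g e * Δ e) = ν / 2 ∧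
      2 * (∑ e, r e * Δ e ^ 2) + (∑ e, |Δ e| ^ k) ≤ ν := by
  set G : ℝ := ∑ e, g e * Δs e with hG
  set S : ℝ := ∑ e, r e * Δs e ^ 2 with hSdef
  set P : ℝ := ∑ e, |Δs e| ^ k with hPdef
  have hS : 0 ≤ S := Finset.sum_nonneg fun e _ => mul_nonneg (hr e) (sq_nonneg _)
  have hP : 0 ≤ P := Finset.sum_nonneg fun e _ =>
    Real.rpow_nonneg (abs_nonneg _) _
  have hres : res g r k Δs = G - 2 * S - P := rfl
  have hGν : ν / 2 < G := by
    have := hlo; rw [hres] at this; linarith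
  have hG0 : 0 < G := lt_trans (by linarith) hGν
  set t : ℝ := ν / (2 * G) with htdef
  have ht0 : 0 < t := div_pos hν (by linarith)
  have ht1 : t ≤ 1 := by
    rw [htdef, div_le_one (by linarith)]; linarith
  refine ⟨fun e => t * Δs e, ?_, ?_, ?_⟩
  · have : (fun e => t * Δs e) = t • Δs := rfl
    rw [this, Matrix.mulVec_smul, hAs, smul_zero]
  · have h1 : (∑ e, g e * (t * Δs e)) = t * G := by
      rw [hG, Finset.mul_sum]; congr 1; ext e; ring
    rw [h1, htdef]; field_simp
  · have h2 : (∑ e, r e * (t * Δs e) ^ 2) = t ^ 2 * S := by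
      rw [hSdef, Finset.mul_sum]; congr 1; ext e; ring
    have h3 : (∑ e, |t * Δs e| ^ k) = t ^ k * P := by
      rw [hPdef, Finset.mul_sum]
      congr 1; ext e
      rw [abs_mul, abs_of_pos ht0, Real.mul_rpow (le_of_lt ht0) (abs_nonneg _)]
    rw [h2, h3]
    have htk : t ^ k ≤ t := by
      have h := Real.rpow_le_rpow_of_exponent_ge ht0 ht1 (by linarith : (1:ℝ) ≤ k)
      rwa [Real.rpow_one] at h
    have ht2 : t ^ 2 ≤ t := by nlinarith
    have hQG : 2 * S + P ≤ G := by
      have := hlo; rw [hres] at this; linarith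
    have htG : t * G = ν / 2 := by
      rw [htdef]; field_simp
    calc 2 * (t ^ 2 * S) + t ^ k * P ≤ 2 * (t * S) + t * P := by
          have : t ^ 2 * S ≤ t * S := mul_le_mul_of_nonneg_right ht2 hS
          have : t ^ k * P ≤ t * P := mul_le_mul_of_nonneg_right htk hP
          nlinarith [mul_le_mul_of_nonneg_right ht2 hS]
      _ = t * (2 * S + P) := by ring
      _ ≤ t * G := mul_le_mul_of_nonneg_left hQG (le_of_lt ht0)
      _ = ν / 2 := htG
      _ ≤ ν := by linarith
end

section
/- Let p ≥ 2 be real, A ∈ ℝ^{n×m}, b ∈ ℝ^n, and C ≥ 1. Suppose x₀ ∈ ℝ^m satisfies Ax₀ = b and ‖x₀‖_p^p ≤ C·‖x‖_p^p for every x with Ax = b. Then for every x* with Ax* = b, ‖x₀‖_{2p}^{2p} ≤ C² m ‖x*‖_{2p}^{2p}. -/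
/-- initial-gap bound in Corollary B.2, IterativeRefinement. -/
theorem stmt_6 {n m : ℕ} {p : ℝ} (hp : 2 ≤ p)
    (A : Matrix (Fin n) (Fin m) ℝ) (b : Fin n → ℝ) {C : ℝ} (hC : 1 ≤ C)
    (x₀ : Fin m → ℝ) (hx₀ : A.mulVec x₀ = b)
    (happrox : ∀ x, A.mulVec x = b → (∑ e, |x₀ e| ^ p) ≤ C * ∑ e, |x e| ^ p) :
    ∀ xs, A.mulVec xs = b →
      (∑ e, |x₀ e| ^ (2 * p)) ≤ C ^ 2 * (m : ℝ) * ∑ e, |xs e| ^ (2 * p) := by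
  intro xs hxs
  have key : ∀ y : Fin m → ℝ, ∀ e : Fin m, |y e| ^ (2 * p) = (|y e| ^ p) ^ 2 := by
    intro y e
    rw [mul_comm, Real.rpow_mul (abs_nonneg _), Real.rpow_two]
  have h0 : ∀ e, (0:ℝ) ≤ |x₀ e| ^ p := fun e => Real.rpow_nonneg (abs_nonneg _) _
  have hs : ∀ e, (0:ℝ) ≤ |xs e| ^ p := fun e => Real.rpow_nonneg (abs_nonneg _) _
  have hsum0 : (0:ℝ) ≤ ∑ e, |x₀ e| ^ p := Finset.sum_nonneg fun e _ => h0 e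
  calc (∑ e, |x₀ e| ^ (2 * p)) = ∑ e, (|x₀ e| ^ p) ^ 2 := by
        simp_rw [key]
    _ ≤ (∑ e, |x₀ e| ^ p) ^ 2 :=
        Finset.sum_sq_le_sq_sum_of_nonneg fun e _ => h0 e
    _ ≤ (C * ∑ e, |xs e| ^ p) ^ 2 := by
        apply pow_le_pow_left₀ hsum0 (happrox xs hxs)
    _ = C ^ 2 * (∑ e, |xs e| ^ p) ^ 2 := by ring
    _ ≤ C ^ 2 * ((m : ℝ) * ∑ e, (|xs e| ^ p) ^ 2) := by
        apply mul_le_mul_of_nonneg_left _ (by positivity)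
        have := sq_sum_le_card_mul_sum_sq (s := Finset.univ) (f := fun e => |xs e| ^ p)
        simpa using this
    _ = C ^ 2 * (m : ℝ) * ∑ e, |xs e| ^ (2 * p) := by
        simp_rw [key]; ring
end

section
/- Let p and q be reals with 2 ≤ q ≤ p, let m ≥ 1, A ∈ ℝ^{n×m}, g ∈ ℝ^m, r ∈ ℝ^m with nonnegative entries, and ν > 0. Suppose Δ* maximizes res_p over {Δ : AΔ = 0} with res_p(Δ*) ∈ (ν/2, ν]. Then: (i) there exists Δ with AΔ = 0 and g^⊤Δ + 2∑_e r_e Δ_e² + (1/4)(ν/m)^{1−q/p}‖Δ‖_q^q ≤ −ν/4; and (ii) if Δ̃ satisfies AΔ̃ = 0 and g^⊤Δ̃ + 2∑_e r_e Δ̃_e² + (1/4)(ν/m)^{1−q/p}‖Δ̃‖_q^q ≤ −ν/16, then there exists a scalar c ∈ ℝ such that res_p(cΔ̃) ≥ (1/16384)·ν·m^{−(p/(p−1))(1/q−1/p)}. -/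
open Finset Real

/-- Weighted AM-GM corollary: `x^(1-θ) * y^θ ≤ x + y`. -/
lemma amgm2 {x y θ : ℝ} (hx : 0 ≤ x) (hy : 0 ≤ y) (h0 : 0 ≤ θ) (h1 : θ ≤ 1) :
    x ^ (1 - θ) * y ^ θ ≤ x + y := by
  have h := Real.geom_mean_le_arith_mean2_weighted (by linarith : (0:ℝ) ≤ 1 - θ) h0 hx hy
    (by ring)
  nlinarith [mul_nonneg h0 hx, mul_nonneg (sub_nonneg.2 h1) hy]

/-- ℓp-norm ≤ ℓq-norm (q ≤ p), power form. -/
lemma lp_le_lq {m : ℕ} (a : Fin m → ℝ) (ha : ∀ e, 0 ≤ a e) {p q : ℝ}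
    (hq : 0 < q) (hqp : q ≤ p) :
    (∑ e, a e ^ p) ^ (q / p) ≤ ∑ e, a e ^ q := by
  have hp : 0 < p := lt_of_lt_of_le hq hqp
  set S := ∑ e, a e ^ q with hS
  have hS0 : 0 ≤ S := Finset.sum_nonneg fun e _ => Real.rpow_nonneg (ha e) q
  have key : ∑ e, a e ^ p ≤ S ^ (p / q) := by
    have hbound : ∀ e, a e ^ p ≤ a e ^ q * S ^ ((p - q) / q) := by
      intro e
      have hae : a e ^ q ≤ S :=
        Finset.single_le_sum (f := fun e => a e ^ q)
          (fun i _ => Real.rpow_nonneg (ha i) q) (Finset.mem_univ e)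
      have haq : a e ≤ S ^ (1 / q) := by
        have h1 : (a e ^ q) ^ (1 / q) ≤ S ^ (1 / q) :=
          Real.rpow_le_rpow (Real.rpow_nonneg (ha e) q) hae (one_div_nonneg.2 hq.le)
        rwa [← Real.rpow_mul (ha e), mul_one_div, div_self hq.ne', Real.rpow_one] at h1
      have h2 : a e ^ (p - q) ≤ (S ^ (1 / q)) ^ (p - q) :=
        Real.rpow_le_rpow (ha e) haq (by linarith)
      have h3 : (S ^ (1 / q)) ^ (p - q) = S ^ ((p - q) / q) := by
        rw [← Real.rpow_mul hS0]; ring_nf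
      have h4 : a e ^ p = a e ^ q * a e ^ (p - q) := by
        rw [← Real.rpow_add' (ha e) (by simpa using hp.ne')]; ring_nf
      rw [h4]
      exact mul_le_mul_of_nonneg_left (h3 ▸ h2) (Real.rpow_nonneg (ha e) q)
    calc ∑ e, a e ^ p ≤ ∑ e, a e ^ q * S ^ ((p - q) / q) :=
          Finset.sum_le_sum fun e _ => hbound e
      _ = S * S ^ ((p - q) / q) := by rw [← Finset.sum_mul]
      _ = S ^ (p / q) := by
          rw [show p / q = 1 + (p - q) / q by field_simp; ring,
            Real.rpow_add' hS0 (by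
              rw [show (1:ℝ) + (p - q) / q = p / q by field_simp; ring]
              exact div_ne_zero hp.ne' hq.ne'), Real.rpow_one]
  calc (∑ e, a e ^ p) ^ (q / p)
      ≤ (S ^ (p / q)) ^ (q / p) :=
        Real.rpow_le_rpow (Finset.sum_nonneg fun e _ => Real.rpow_nonneg (ha e) p) key
          (div_nonneg hq.le hp.le)
    _ = S := by
        rw [← Real.rpow_mul hS0, div_mul_div_comm, mul_comm,
          div_self (mul_ne_zero hq.ne' hp.ne'), Real.rpow_one]

/-- ℓq-norm vs ℓp-norm with dimension factor. -/
lemma lq_le_dim_mul {m : ℕ} (hm : 1 ≤ m) (a : Fin m → ℝ) (ha : ∀ e, 0 ≤ a e) {p q : ℝ}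
    (hq : 0 < q) (hqp : q ≤ p) :
    ∑ e, a e ^ q ≤ (m : ℝ) ^ (1 - q / p) * (∑ e, a e ^ p) ^ (q / p) := by
  have hp : 0 < p := lt_of_lt_of_le hq hqp
  have hm0 : (0:ℝ) < m := by exact_mod_cast hm.trans_lt' (by norm_num)
  have hw : ∑ _e : Fin m, (1 / (m:ℝ)) = 1 := by
    simp [Finset.sum_const, Finset.card_univ]
    field_simp
  have h := Real.rpow_arith_mean_le_arith_mean_rpow Finset.univ (fun _ => 1 / (m:ℝ))
    (fun e => a e ^ q) (fun i _ => by positivity) hw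
    (fun i _ => Real.rpow_nonneg (ha i) q) (by
      rw [le_div_iff₀ hq]; linarith : 1 ≤ p / q)
  have hz : ∀ e : Fin m, (a e ^ q) ^ (p / q) = a e ^ p := by
    intro e; rw [← Real.rpow_mul (ha e), mul_div_cancel₀ _ hq.ne']
  simp only [hz] at h
  rw [← Finset.mul_sum, ← Finset.mul_sum] at h
  have hQ0 : 0 ≤ ∑ e, a e ^ q := Finset.sum_nonneg fun e _ => Real.rpow_nonneg (ha e) q
  have hP0 : 0 ≤ ∑ e, a e ^ p := Finset.sum_nonneg fun e _ => Real.rpow_nonneg (ha e) p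
  -- h : (1/m * ∑ a^q) ^ (p/q) ≤ 1/m * ∑ a^p
  have h2 : ((1 / (m:ℝ) * ∑ e, a e ^ q) ^ (p / q)) ^ (q / p) ≤
      (1 / (m:ℝ) * ∑ e, a e ^ p) ^ (q / p) :=
    Real.rpow_le_rpow (Real.rpow_nonneg (mul_nonneg (by positivity) hQ0) _) h
      (div_nonneg hq.le hp.le)
  rw [← Real.rpow_mul (mul_nonneg (by positivity) hQ0), div_mul_div_comm, mul_comm p q,
    div_self (mul_ne_zero hq.ne' hp.ne'), Real.rpow_one,
    Real.mul_rpow (by positivity) hP0] at h2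
  have hmq : (1 / (m:ℝ)) ^ (q / p) = ((m:ℝ) ^ (q / p))⁻¹ := by
    rw [one_div, Real.inv_rpow hm0.le]
  rw [hmq] at h2
  have hfin : ∑ e, a e ^ q ≤ (m:ℝ) * (((m:ℝ) ^ (q / p))⁻¹ * (∑ e, a e ^ p) ^ (q / p)) := by
    calc ∑ e, a e ^ q = (m:ℝ) * (1 / (m:ℝ) * ∑ e, a e ^ q) := by field_simp
      _ ≤ (m:ℝ) * (((m:ℝ) ^ (q / p))⁻¹ * (∑ e, a e ^ p) ^ (q / p)) :=
          mul_le_mul_of_nonneg_left h2 hm0.le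
  calc ∑ e, a e ^ q ≤ (m:ℝ) * (((m:ℝ) ^ (q / p))⁻¹ * (∑ e, a e ^ p) ^ (q / p)) := hfin
    _ = (m : ℝ) ^ (1 - q / p) * (∑ e, a e ^ p) ^ (q / p) := by
        rw [Real.rpow_sub hm0, Real.rpow_one, div_eq_mul_inv]; ring

set_option maxHeartbeats 4000000

/-- Lemma 4.2, qSTOCoracle, case `q ≤ p`. -/
theorem stmt_10 {n m : ℕ} (hm : 1 ≤ m) {p q : ℝ} (hq : 2 ≤ q) (hqp : q ≤ p)
    (A : Matrix (Fin n) (Fin m) ℝ) (g r : Fin m → ℝ) (hr : ∀ e, 0 ≤ r e)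
    {ν : ℝ} (hν : 0 < ν) (Δs : Fin m → ℝ) (hAs : A.mulVec Δs = 0)
    (hmax : ∀ Δ, A.mulVec Δ = 0 → res g r p Δ ≤ res g r p Δs)
    (hlo : ν / 2 < res g r p Δs) (hhi : res g r p Δs ≤ ν) :
    (∃ Δ : Fin m → ℝ, A.mulVec Δ = 0 ∧
        (∑ e, g e * Δ e) + 2 * (∑ e, r e * Δ e ^ 2)
            + 1 / 4 * ((ν / (m : ℝ)) ^ (1 - q / p)) * (∑ e, |Δ e| ^ q) ≤ -ν / 4) ∧
      ∀ Δt : Fin m → ℝ, A.mulVec Δt = 0 →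
        (∑ e, g e * Δt e) + 2 * (∑ e, r e * Δt e ^ 2)
            + 1 / 4 * ((ν / (m : ℝ)) ^ (1 - q / p)) * (∑ e, |Δt e| ^ q) ≤ -ν / 16 →
        ∃ c : ℝ, res g r p (fun e => c * Δt e)
          ≥ 1 / 16384 * ν * (m : ℝ) ^ (-(p / (p - 1)) * (1 / q - 1 / p)) := by
  have hm0 : (0:ℝ) < m := by exact_mod_cast Nat.lt_of_lt_of_le Nat.zero_lt_one hm
  have hm1 : (1:ℝ) ≤ m := by exact_mod_cast hm
  have hq0 : (0:ℝ) < q := by linarith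
  have hp0 : (0:ℝ) < p := by linarith
  have hp2 : (2:ℝ) ≤ p := by linarith
  have hp1 : (1:ℝ) < p := by linarith
  have hD0 : 0 ≤ (ν / (m:ℝ)) ^ (1 - q / p) := Real.rpow_nonneg (by positivity) _
  constructor
  · -- Part (i): the witness `-Δs`.
    refine ⟨fun e => -Δs e, by
      show A.mulVec (-Δs) = 0
      rw [Matrix.mulVec_neg, hAs, neg_zero], ?_⟩
    simp only [mul_neg, neg_sq, abs_neg, Finset.sum_neg_distrib]
    set G := ∑ e, g e * Δs e
    set S := ∑ e, r e * Δs e ^ 2 with hSdef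
    set P := ∑ e, |Δs e| ^ p with hPdef
    set Q := ∑ e, |Δs e| ^ q with hQdef
    have hS0 : 0 ≤ S := Finset.sum_nonneg fun e _ => mul_nonneg (hr e) (sq_nonneg _)
    have hP0 : 0 ≤ P := Finset.sum_nonneg fun e _ => Real.rpow_nonneg (abs_nonneg _) _
    have hlo' : ν / 2 < G - 2 * S - P := hlo
    have hL1 : Q ≤ (m:ℝ) ^ (1 - q / p) * P ^ (q / p) :=
      lq_le_dim_mul hm (fun e => |Δs e|) (fun e => abs_nonneg _) hq0 hqp
    have hDm : (ν / (m:ℝ)) ^ (1 - q / p) * (m:ℝ) ^ (1 - q / p) = ν ^ (1 - q / p) := by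
      rw [← Real.mul_rpow (by positivity) hm0.le, div_mul_cancel₀ _ hm0.ne']
    have hAM : ν ^ (1 - q / p) * P ^ (q / p) ≤ ν + P :=
      amgm2 hν.le hP0 (div_nonneg hq0.le hp0.le) ((div_le_one hp0).2 hqp)
    have hκQ : 1 / 4 * ((ν / (m:ℝ)) ^ (1 - q / p)) * Q ≤ ν / 4 + P := by
      have h1 : 1 / 4 * ((ν / (m:ℝ)) ^ (1 - q / p)) * Q ≤
          1 / 4 * ((ν / (m:ℝ)) ^ (1 - q / p)) * ((m:ℝ) ^ (1 - q / p) * P ^ (q / p)) :=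
        mul_le_mul_of_nonneg_left hL1 (by positivity)
      have h2 : 1 / 4 * ((ν / (m:ℝ)) ^ (1 - q / p)) * ((m:ℝ) ^ (1 - q / p) * P ^ (q / p))
          = 1 / 4 * (ν ^ (1 - q / p) * P ^ (q / p)) := by
        rw [← hDm]; ring
      nlinarith [h1, h2, hAM]
    linarith
  · -- Part (ii)
    intro Δt hAt hγ
    set E := -(p / (p - 1)) * (1 / q - 1 / p) with hEdef
    set D := (ν / (m:ℝ)) ^ (1 - q / p) with hDdef
    set G := ∑ e, g e * Δt e with hGdef
    set S := ∑ e, r e * Δt e ^ 2 with hSdef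
    set P := ∑ e, |Δt e| ^ p with hPdef
    set Q := ∑ e, |Δt e| ^ q with hQdef
    set T := 1 / 16384 * ν * (m:ℝ) ^ E with hTdef
    clear_value E D G S P Q T
    have hpm1 : (0:ℝ) < p - 1 := by linarith
    have hDpos : 0 < D := by rw [hDdef]; exact Real.rpow_pos_of_pos (div_pos hν hm0) _
    have hκ0 : (0:ℝ) ≤ 1 / 4 * D := mul_nonneg (by norm_num) hDpos.le
    have hS0 : 0 ≤ S := by
      rw [hSdef]; exact Finset.sum_nonneg fun e _ => mul_nonneg (hr e) (sq_nonneg _)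
    have hP0 : 0 ≤ P := by
      rw [hPdef]; exact Finset.sum_nonneg fun e _ => Real.rpow_nonneg (abs_nonneg _) _
    have hQ0 : 0 ≤ Q := by
      rw [hQdef]; exact Finset.sum_nonneg fun e _ => Real.rpow_nonneg (abs_nonneg _) _
    -- Δt is nonzero
    have hPpos : 0 < P := by
      rcases em (∀ e, Δt e = 0) with hall | hne
      · exfalso
        have hG : G = 0 := by simp [hGdef, hall]
        have hS : S = 0 := by simp [hSdef, hall]
        have hQ : Q = 0 := by simp [hQdef, hall, Real.zero_rpow hq0.ne']
        rw [hG, hS, hQ] at hγ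
        simp at hγ
        linarith
      · push_neg at hne
        obtain ⟨e0, he0⟩ := hne
        have h1 : |Δt e0| ^ p ≤ P := by
          rw [hPdef]
          exact Finset.single_le_sum (f := fun e => |Δt e| ^ p)
            (fun i _ => Real.rpow_nonneg (abs_nonneg _) _) (Finset.mem_univ e0)
        have h2 : 0 < |Δt e0| ^ p := Real.rpow_pos_of_pos (abs_pos.2 he0) p
        linarith
    set M := ν / 16 + 1 / 4 * D * Q with hMdef
    clear_value M
    have hM : 0 < M := by
      rw [hMdef]
      have : 0 ≤ 1 / 4 * D * Q := mul_nonneg hκ0 hQ0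
      linarith
    set t := min 1 ((M / (2 * P)) ^ (1 / (p - 1))) with htdef
    clear_value t
    have hMP0 : 0 < M / (2 * P) := div_pos hM (by linarith)
    have ht0 : 0 < t := by
      rw [htdef]; exact lt_min one_pos (Real.rpow_pos_of_pos hMP0 _)
    have ht1 : t ≤ 1 := by rw [htdef]; exact min_le_left _ _
    -- the value of `res` at `-t • Δt`
    have e1 : ∑ e, g e * (-t * Δt e) = -t * G := by
      rw [hGdef, Finset.mul_sum]
      exact Finset.sum_congr rfl fun e _ => by ring
    have e2 : ∑ e, r e * (-t * Δt e) ^ 2 = t ^ 2 * S := by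
      rw [hSdef, Finset.mul_sum]
      exact Finset.sum_congr rfl fun e _ => by ring
    have e3 : ∑ e, |-t * Δt e| ^ p = t ^ p * P := by
      rw [hPdef, Finset.mul_sum]
      refine Finset.sum_congr rfl fun e _ => ?_
      rw [abs_mul, abs_neg, abs_of_nonneg ht0.le, Real.mul_rpow ht0.le (abs_nonneg _)]
    have hres : res g r p (fun e => -t * Δt e) = -t * G - 2 * (t ^ 2 * S) - t ^ p * P := by
      simp only [res]
      rw [e1, e2, e3]
    have hG' : ν / 16 + 2 * S + 1 / 4 * D * Q ≤ -G := by linarith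
    have key1 : t * (ν / 16 + 2 * S + 1 / 4 * D * Q) ≤ t * (-G) :=
      mul_le_mul_of_nonneg_left hG' ht0.le
    have key2 : 0 ≤ 2 * S * (t * (1 - t)) :=
      mul_nonneg (by linarith) (mul_nonneg ht0.le (by linarith))
    have hlower : t * M - t ^ p * P ≤ res g r p (fun e => -t * Δt e) := by
      rw [hres, hMdef]
      linarith [key1, key2]
    -- basic facts about the target T
    have hE0 : E ≤ 0 := by
      rw [hEdef]
      have h1 : 0 ≤ 1 / q - 1 / p := by
        rw [sub_nonneg]
        exact one_div_le_one_div_of_le hq0 hqp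
      have h2 : 0 < p / (p - 1) := div_pos hp0 hpm1
      linarith [mul_nonneg h2.le h1]
    have hT0 : 0 < T := by
      rw [hTdef]
      exact mul_pos (by linarith) (Real.rpow_pos_of_pos hm0 E)
    have hT1 : T ≤ ν / 16384 := by
      rw [hTdef]
      have h1 := Real.rpow_le_one_of_one_le_of_nonpos hm1 hE0
      have h2 := mul_le_mul_of_nonneg_left h1 hν.le
      linarith [h2]
    refine ⟨-t, ?_⟩
    rw [ge_iff_le]
    rcases le_or_gt (2 * P) M with hcase | hcase
    · -- case 2P ≤ M : take t = 1
      have hge1 : 1 ≤ (M / (2 * P)) ^ (1 / (p - 1)) :=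
        Real.one_le_rpow ((one_le_div (by linarith)).2 hcase) (one_div_nonneg.2 hpm1.le)
      have ht : t = 1 := by rw [htdef]; exact min_eq_left hge1
      have hl1 : t * M = M := by rw [ht]; ring
      have hl2 : t ^ p * P = P := by rw [ht, Real.one_rpow, one_mul]
      have hMν : ν / 16 ≤ M := by
        rw [hMdef]; linarith [mul_nonneg hκ0 hQ0]
      linarith [hlower, hl1, hl2]
    · -- case M < 2P
      have hMP1 : M / (2 * P) < 1 := (div_lt_one (by linarith)).2 hcase
      have htlt : (M / (2 * P)) ^ (1 / (p - 1)) ≤ 1 :=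
        Real.rpow_le_one hMP0.le hMP1.le (one_div_nonneg.2 hpm1.le)
      have ht : t = (M / (2 * P)) ^ (1 / (p - 1)) := by rw [htdef]; exact min_eq_right htlt
      have htp1 : t ^ (p - 1) = M / (2 * P) := by
        rw [ht, ← Real.rpow_mul hMP0.le, one_div_mul_cancel hpm1.ne', Real.rpow_one]
      have htp : t ^ p * P = t * (M / 2) := by
        have hsplit : t ^ p = t ^ (p - 1) * t := by
          rw [show t ^ p = t ^ (p - 1 + 1) by ring_nf, Real.rpow_add_one ht0.ne']
        rw [hsplit, htp1]
        field_simp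
      -- ℓq/ℓp comparison
      have hPq : P ^ (q / p) ≤ Q := by
        rw [hPdef, hQdef]
        exact lp_le_lq (fun e => |Δt e|) (fun e => abs_nonneg _) hq0 hqp
      have hκP : (0:ℝ) ≤ 1 / 4 * D * P ^ (q / p) :=
        mul_nonneg hκ0 (Real.rpow_nonneg hP0 _)
      -- AM-GM lower bound on M
      have hXY : (ν / 16) ^ (1 - 1 / q) * (1 / 4 * D * P ^ (q / p)) ^ (1 / q) ≤ M := by
        have am := amgm2 (x := ν / 16) (y := 1 / 4 * D * P ^ (q / p)) (θ := 1 / q)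
          (by linarith) hκP (one_div_nonneg.2 hq0.le)
          (by rw [div_le_one hq0]; linarith)
        have hmono : 1 / 4 * D * P ^ (q / p) ≤ 1 / 4 * D * Q :=
          mul_le_mul_of_nonneg_left hPq hκ0
        rw [hMdef]
        linarith
      have hXY0 : (0:ℝ) ≤ (ν / 16) ^ (1 - 1 / q) * (1 / 4 * D * P ^ (q / p)) ^ (1 / q) :=
        mul_nonneg (Real.rpow_nonneg (by linarith) _) (Real.rpow_nonneg hκP _)
      have hMp : (ν / 16) ^ ((1 - 1 / q) * p) * ((1 / 4 * D) ^ (p / q) * P) ≤ M ^ p := by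
        have h := Real.rpow_le_rpow hXY0 hXY hp0.le
        rw [Real.mul_rpow (Real.rpow_nonneg (by linarith : (0:ℝ) ≤ ν / 16) _)
            (Real.rpow_nonneg hκP _)] at h
        rw [← Real.rpow_mul (by linarith : (0:ℝ) ≤ ν / 16)] at h
        rw [← Real.rpow_mul hκP] at h
        rw [show 1 / q * p = p / q by ring] at h
        rw [Real.mul_rpow hκ0 (Real.rpow_nonneg hP0 _)] at h
        rw [← Real.rpow_mul hP0] at h
        rw [show q / p * (p / q) = 1 by field_simp, Real.rpow_one] at h
        exact h
      -- the constant comparison, via logarithms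
      have hE1 : E * (p - 1) = 1 - p / q := by
        rw [hEdef]; field_simp; ring
      set A1 := (1 / 16384 * ν) ^ (p - 1) * (m:ℝ) ^ (E * (p - 1)) * 2 ^ p with hA1def
      set A2 := (ν / 16) ^ ((1 - 1 / q) * p) * (1 / 4 * D) ^ (p / q) with hA2def
      have hA1pos : 0 < A1 := by
        rw [hA1def]
        exact mul_pos (mul_pos (Real.rpow_pos_of_pos (by linarith) _)
          (Real.rpow_pos_of_pos hm0 _)) (Real.rpow_pos_of_pos two_pos _)
      have hA2pos : 0 < A2 := by
        rw [hA2def]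
        exact mul_pos (Real.rpow_pos_of_pos (by linarith) _)
          (Real.rpow_pos_of_pos (by linarith) _)
      have hL2 : (0:ℝ) < Real.log 2 := Real.log_pos (by norm_num)
      have hLm : 0 ≤ Real.log m := Real.log_nonneg hm1
      have hlogD : Real.log D = (1 - q / p) * (Real.log ν - Real.log m) := by
        rw [hDdef, Real.log_rpow (div_pos hν hm0), Real.log_div hν.ne' hm0.ne']
      have l1 : Real.log A1 =
          (p - 1) * (Real.log ν - 14 * Real.log 2) + (1 - p / q) * Real.log m
            + p * Real.log 2 := by
        rw [hA1def, Real.log_mul (by positivity) (Real.rpow_pos_of_pos two_pos _).ne',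
          Real.log_mul (by positivity) (Real.rpow_pos_of_pos hm0 _).ne',
          Real.log_rpow (by linarith : (0:ℝ) < 1 / 16384 * ν), Real.log_rpow hm0,
          Real.log_rpow two_pos, hE1,
          Real.log_mul (by norm_num) hν.ne']
        rw [show Real.log (1 / 16384 : ℝ) = -(14 * Real.log 2) by
          rw [show (1 / 16384 : ℝ) = ((2:ℝ) ^ (14:ℕ))⁻¹ by norm_num, Real.log_inv,
            Real.log_pow]
          (try push_cast); (try ring)]
        ring
      have l2 : Real.log A2 =
          (1 - 1 / q) * p * (Real.log ν - 4 * Real.log 2)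
            + p / q * (-(2 * Real.log 2) + (1 - q / p) * (Real.log ν - Real.log m)) := by
        rw [hA2def, Real.log_mul (Real.rpow_pos_of_pos (by linarith) _).ne'
            (Real.rpow_pos_of_pos (by linarith) _).ne',
          Real.log_rpow (by linarith : (0:ℝ) < ν / 16),
          Real.log_rpow (by linarith : (0:ℝ) < 1 / 4 * D),
          Real.log_div hν.ne' (by norm_num : (16:ℝ) ≠ 0),
          Real.log_mul (by norm_num) hDpos.ne', hlogD]
        rw [show Real.log (16 : ℝ) = 4 * Real.log 2 by
          rw [show (16 : ℝ) = (2:ℝ) ^ (4:ℕ) by norm_num, Real.log_pow]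
          (try push_cast); (try ring)]
        rw [show Real.log (1 / 4 : ℝ) = -(2 * Real.log 2) by
          rw [show (1 / 4 : ℝ) = ((2:ℝ) ^ (2:ℕ))⁻¹ by norm_num, Real.log_inv, Real.log_pow]
          (try push_cast); (try ring)]
        try ring
      have h9 : (0:ℝ) ≤ 9 * p + 2 * (p / q) - 14 := by
        have : 0 < p / q := div_pos hp0 hq0
        linarith
      have hdiff : Real.log A2 - Real.log A1 = (9 * p + 2 * (p / q) - 14) * Real.log 2 := by
        rw [l1, l2]
        field_simp
        ring
      have hA12 : A1 ≤ A2 := by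
        rw [← Real.log_le_log_iff hA1pos hA2pos]
        linarith [hdiff, mul_nonneg h9 hL2.le]
      have hfinal : A1 * P ≤ A2 * P := mul_le_mul_of_nonneg_right hA12 hP0
      -- express T^(p-1)
      have hTexp : T ^ (p - 1) = (1 / 16384 * ν) ^ (p - 1) * (m:ℝ) ^ (E * (p - 1)) := by
        rw [hTdef, Real.mul_rpow (by linarith : (0:ℝ) ≤ 1 / 16384 * ν)
          (Real.rpow_nonneg hm0.le _), ← Real.rpow_mul hm0.le]
      have h2p : (2:ℝ) ^ (p - 1) * 2 = 2 ^ p := by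
        rw [← Real.rpow_add_one (by norm_num : (2:ℝ) ≠ 0) (p - 1)]
        ring_nf
      have hgoalB : T ^ (p - 1) * (2 * P) * 2 ^ (p - 1) ≤ M ^ p := by
        have hq1 : T ^ (p - 1) * (2 * P) * 2 ^ (p - 1) = A1 * P := by
          rw [hTexp, hA1def, ← h2p]; ring
        have hq2 : A2 * P = (ν / 16) ^ ((1 - 1 / q) * p) * ((1 / 4 * D) ^ (p / q) * P) := by
          rw [hA2def]; ring
        rw [hq1]
        calc A1 * P ≤ A2 * P := hfinal
          _ = (ν / 16) ^ ((1 - 1 / q) * p) * ((1 / 4 * D) ^ (p / q) * P) := hq2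
          _ ≤ M ^ p := hMp
      -- (t*(M/2))^(p-1) = M^p / (2*P*2^(p-1))
      have hMM : M * M ^ (p - 1) = M ^ p := by
        rw [Real.rpow_sub hM, Real.rpow_one]
        field_simp
      have eqA : (t * (M / 2)) ^ (p - 1) = M ^ p / (2 * P * 2 ^ (p - 1)) := by
        rw [Real.mul_rpow ht0.le (by linarith : (0:ℝ) ≤ M / 2), htp1,
          Real.div_rpow hM.le (by norm_num : (0:ℝ) ≤ 2)]
        rw [← hMM]
        field_simp
        try ring
      have step : T ^ (p - 1) ≤ (t * (M / 2)) ^ (p - 1) := by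
        rw [eqA, le_div_iff₀ (by positivity)]
        linarith [hgoalB]
      have hTle : T ≤ t * (M / 2) :=
        (Real.rpow_le_rpow_iff hT0.le (mul_nonneg ht0.le (by linarith)) hpm1).1 step
      linarith [hlower, htp, hTle]
end

section
/- Let p and q be reals with 2 ≤ p ≤ q, let m ≥ 1, A ∈ ℝ^{n×m}, g ∈ ℝ^m, r ∈ ℝ^m with nonnegative entries, and ν > 0. Suppose Δ* maximizes res_p over {Δ : AΔ = 0} with res_p(Δ*) ∈ (ν/2, ν]. Then: (i) there exists Δ with AΔ = 0 and g^⊤Δ + 2∑_e r_e Δ_e² + (ν^{1−q/p}/4)‖Δ‖_q^q ≤ −ν/4; and (ii) if Δ̃ satisfies AΔ̃ = 0 and g^⊤Δ̃ + 2∑_e r_e Δ̃_e² + (ν^{1−q/p}/4)‖Δ̃‖_q^q ≤ −ν/16, then there exists a scalar c ∈ ℝ such that res_p(cΔ̃) ≥ (1/16384)·ν·m^{−(p/(p−1))(1/p−1/q)}. -/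
lemma aux_sum_g {m : ℕ} (g Δ : Fin m → ℝ) (c : ℝ) :
    ∑ e, g e * (c * Δ e) = c * ∑ e, g e * Δ e := by
  rw [Finset.mul_sum]; exact Finset.sum_congr rfl fun e _ => by ring

lemma aux_sum_r {m : ℕ} (r Δ : Fin m → ℝ) (c : ℝ) :
    ∑ e, r e * (c * Δ e) ^ 2 = c ^ 2 * ∑ e, r e * Δ e ^ 2 := by
  rw [Finset.mul_sum]; exact Finset.sum_congr rfl fun e _ => by ring

lemma aux_sum_abs {m : ℕ} (Δ : Fin m → ℝ) (c t : ℝ) :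
    ∑ e, |c * Δ e| ^ t = |c| ^ t * ∑ e, |Δ e| ^ t := by
  rw [Finset.mul_sum]
  exact Finset.sum_congr rfl fun e _ => by
    rw [abs_mul, Real.mul_rpow (abs_nonneg _) (abs_nonneg _)]

lemma aux_mulVec {n m : ℕ} (A : Matrix (Fin n) (Fin m) ℝ) (Δ : Fin m → ℝ) (c : ℝ)
    (h : A.mulVec Δ = 0) : A.mulVec (fun e => c * Δ e) = 0 := by
  have h2 : (fun e => c * Δ e) = c • Δ := by funext e; simp
  rw [h2, Matrix.mulVec_smul, h, smul_zero]

lemma res_scale {m : ℕ} (g r : Fin m → ℝ) (p c : ℝ) (Δ : Fin m → ℝ) :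
    res g r p (fun e => c * Δ e) =
      c * (∑ e, g e * Δ e) - 2 * c ^ 2 * (∑ e, r e * Δ e ^ 2)
        - |c| ^ p * ∑ e, |Δ e| ^ p := by
  unfold res
  rw [aux_sum_g, aux_sum_r, aux_sum_abs]; ring

lemma aux_holder {m : ℕ} {p q : ℝ} (hp : 0 < p) (hpq : p ≤ q) (x : Fin m → ℝ) :
    ∑ e, |x e| ^ p ≤ (m : ℝ) ^ (1 - p / q) * (∑ e, |x e| ^ q) ^ (p / q) := by
  have hq : 0 < q := lt_of_lt_of_le hp hpq
  have h1 : (1:ℝ) ≤ q / p := (one_le_div hp).2 hpq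
  have h := Real.inner_le_weight_mul_Lp_of_nonneg (Finset.univ (α := Fin m)) h1
    (fun _ => (1:ℝ)) (fun e => |x e| ^ p) (fun _ => zero_le_one)
    (fun e => Real.rpow_nonneg (abs_nonneg _) _)
  simp only [one_mul, Finset.sum_const, Finset.card_univ, Fintype.card_fin, nsmul_eq_mul,
    mul_one] at h
  have hinv : (q / p)⁻¹ = p / q := by rw [inv_div]
  have hexp : ∀ e : Fin m, (|x e| ^ p) ^ (q / p) = |x e| ^ q := by
    intro e
    rw [← Real.rpow_mul (abs_nonneg _)]
    congr 1
    field_simp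
  rw [hinv] at h
  calc ∑ e, |x e| ^ p ≤ (m : ℝ) ^ (1 - p/q) * (∑ e, (|x e| ^ p) ^ (q/p)) ^ (p/q) := h
    _ = _ := by rw [Finset.sum_congr rfl fun e _ => hexp e]

lemma aux_key {ν Q p q : ℝ} (hν : 0 < ν) (hQ : 0 ≤ Q) (hp : 0 < p) (hpq : p ≤ q) :
    Q ^ (p / q) ≤ ν + ν ^ (1 - q / p) * Q := by
  have hq : 0 < q := lt_of_lt_of_le hp hpq
  rcases le_or_gt Q (ν ^ (q / p)) with h | h
  · have h2 : Q ^ (p/q) ≤ (ν ^ (q/p)) ^ (p/q) :=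
      Real.rpow_le_rpow hQ h (by positivity)
    have h3 : (ν ^ (q/p)) ^ (p/q) = ν := by
      rw [← Real.rpow_mul hν.le, div_mul_div_comm, mul_comm q p,
        div_self (by positivity), Real.rpow_one]
    nlinarith [mul_nonneg (Real.rpow_nonneg hν.le (1 - q/p)) hQ]
  · have hQ0 : 0 < Q := lt_trans (Real.rpow_pos_of_pos hν _) h
    have h2 : Q ^ (p/q - 1) ≤ (ν ^ (q/p)) ^ (p/q - 1) := by
      apply Real.rpow_le_rpow_of_nonpos (Real.rpow_pos_of_pos hν _) h.le
      have : p / q ≤ 1 := div_le_one_of_le₀ hpq hq.le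
      linarith
    have h3 : (ν ^ (q/p)) ^ (p/q - 1) = ν ^ (1 - q/p) := by
      rw [← Real.rpow_mul hν.le]
      congr 1
      field_simp
    have h4 : Q ^ (p/q) = Q ^ (p/q - 1) * Q := by
      rw [← Real.rpow_add_one hQ0.ne']
      ring_nf
    rw [h4]
    nlinarith [mul_le_mul_of_nonneg_right (h3 ▸ h2) hQ0.le]

set_option maxHeartbeats 2000000 in
/-- Lemma B.8, qSTOCoracleSmallp, case `p ≤ q`. -/
theorem stmt_11 {n m : ℕ} (hm : 1 ≤ m) {p q : ℝ} (hp : 2 ≤ p) (hpq : p ≤ q)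
    (A : Matrix (Fin n) (Fin m) ℝ) (g r : Fin m → ℝ) (hr : ∀ e, 0 ≤ r e)
    {ν : ℝ} (hν : 0 < ν) (Δs : Fin m → ℝ) (hAs : A.mulVec Δs = 0)
    (hmax : ∀ Δ, A.mulVec Δ = 0 → res g r p Δ ≤ res g r p Δs)
    (hlo : ν / 2 < res g r p Δs) (hhi : res g r p Δs ≤ ν) :
    (∃ Δ : Fin m → ℝ, A.mulVec Δ = 0 ∧
        (∑ e, g e * Δ e) + 2 * (∑ e, r e * Δ e ^ 2)
            + (ν ^ (1 - q / p) / 4) * (∑ e, |Δ e| ^ q) ≤ -ν / 4) ∧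
      ∀ Δt : Fin m → ℝ, A.mulVec Δt = 0 →
        (∑ e, g e * Δt e) + 2 * (∑ e, r e * Δt e ^ 2)
            + (ν ^ (1 - q / p) / 4) * (∑ e, |Δt e| ^ q) ≤ -ν / 16 →
        ∃ c : ℝ, res g r p (fun e => c * Δt e)
          ≥ 1 / 16384 * ν * (m : ℝ) ^ (-(p / (p - 1)) * (1 / p - 1 / q)) := by
  have hp0 : (0:ℝ) < p := by linarith
  have hq0 : (0:ℝ) < q := by linarith
  have hc0 : (0:ℝ) ≤ ν ^ (1 - q/p) / 4 := by positivity
  obtain ⟨G, hGdef⟩ : ∃ x : ℝ, x = ∑ e, g e * Δs e := ⟨_, rfl⟩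
  obtain ⟨R, hRdef⟩ : ∃ x : ℝ, x = ∑ e, r e * Δs e ^ 2 := ⟨_, rfl⟩
  obtain ⟨P, hPdef⟩ : ∃ x : ℝ, x = ∑ e, |Δs e| ^ p := ⟨_, rfl⟩
  obtain ⟨Q, hQdef⟩ : ∃ x : ℝ, x = ∑ e, |Δs e| ^ q := ⟨_, rfl⟩
  have hR : 0 ≤ R := by
    rw [hRdef]; exact Finset.sum_nonneg fun e _ => mul_nonneg (hr e) (sq_nonneg _)
  have hP : 0 ≤ P := by
    rw [hPdef]; exact Finset.sum_nonneg fun e _ => Real.rpow_nonneg (abs_nonneg _) _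
  have hQ : 0 ≤ Q := by
    rw [hQdef]; exact Finset.sum_nonneg fun e _ => Real.rpow_nonneg (abs_nonneg _) _
  have hS : res g r p Δs = G - 2*R - P := by
    unfold res; rw [hGdef, hRdef, hPdef]
  rw [hS] at hmax hlo hhi
  -- P ≤ 2ν
  have hPν : P ≤ 2 * ν := by
    have h34 := hmax (fun e => (3/4 : ℝ) * Δs e) (aux_mulVec A Δs _ hAs)
    rw [res_scale, ← hGdef, ← hRdef, ← hPdef] at h34
    have habs : |(3/4 : ℝ)| = 3/4 := by norm_num
    rw [habs] at h34
    have htp : ((3:ℝ)/4) ^ p ≤ 9/16 := by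
      have h2 := Real.rpow_le_rpow_of_exponent_ge (by norm_num : (0:ℝ) < 3/4)
        (by norm_num) hp
      calc (3/4:ℝ) ^ p ≤ (3/4:ℝ) ^ (2:ℝ) := h2
        _ = 9/16 := by
          rw [show (2:ℝ) = ((2:ℕ):ℝ) by norm_num, Real.rpow_natCast]; norm_num
    linarith only [h34, mul_le_mul_of_nonneg_right htp hP, hR, hhi, hν]
  constructor
  · -- Part (i)
    obtain ⟨s, hsdef⟩ : ∃ x : ℝ, x = (2:ℝ) ^ (-(1/p)) := ⟨_, rfl⟩
    have hs0 : 0 < s := by rw [hsdef]; exact Real.rpow_pos_of_pos two_pos _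
    have hs1 : s ≤ 1 := by
      rw [hsdef]
      exact Real.rpow_le_one_of_one_le_of_nonpos one_le_two
        (by rw [neg_nonpos]; positivity)
    have hsq : s ^ q = (2:ℝ) ^ (-(q/p)) := by
      rw [hsdef, ← Real.rpow_mul (by norm_num : (0:ℝ) ≤ 2)]
      congr 1
      ring
    have hshalf : 1/2 ≤ s := by
      have h2 : (2:ℝ) ^ (-(1:ℝ)) ≤ (2:ℝ) ^ (-(1/p)) := by
        apply Real.rpow_le_rpow_of_exponent_le one_le_two
        have : 1/p ≤ 1 := by rw [div_le_one hp0]; linarith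
        linarith
      rw [Real.rpow_neg_one] at h2
      rw [hsdef]; linarith
    refine ⟨fun e => (-s) * Δs e, aux_mulVec A Δs _ hAs, ?_⟩
    rw [aux_sum_g, aux_sum_r, aux_sum_abs, ← hGdef, ← hRdef, ← hQdef,
      abs_neg, abs_of_pos hs0]
    -- Q ≤ (2ν)^(q/p-1) * P
    have hQP : Q ≤ (2*ν) ^ (q/p - 1) * P := by
      rw [hQdef, hPdef, Finset.mul_sum]
      apply Finset.sum_le_sum
      intro e _
      have hxP : |Δs e| ^ p ≤ 2*ν := by
        have hsum : |Δs e| ^ p ≤ ∑ x, |Δs x| ^ p :=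
          Finset.single_le_sum (f := fun e => |Δs e| ^ p)
            (fun i _ => Real.rpow_nonneg (abs_nonneg _) _) (Finset.mem_univ e)
        rw [← hPdef] at hsum
        linarith
      rcases eq_or_lt_of_le (abs_nonneg (Δs e)) with hx0 | hx0
      · rw [← hx0]
        simp [Real.zero_rpow hq0.ne', Real.zero_rpow hp0.ne']
      · have hxle : |Δs e| ≤ (2*ν) ^ (1/p) := by
          have h2 := Real.rpow_le_rpow (Real.rpow_nonneg (abs_nonneg _) _) hxP
            (by positivity : (0:ℝ) ≤ 1/p)
          rwa [← Real.rpow_mul (abs_nonneg _), mul_one_div, div_self hp0.ne',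
            Real.rpow_one] at h2
        have hsplit : p + (q - p) = q := by ring
        have h1 : |Δs e| ^ q = |Δs e| ^ p * |Δs e| ^ (q-p) := by
          rw [← Real.rpow_add hx0, hsplit]
        have h2 : |Δs e| ^ (q-p) ≤ ((2*ν) ^ (1/p)) ^ (q-p) :=
          Real.rpow_le_rpow (abs_nonneg _) hxle (by linarith)
        have h3 : ((2*ν) ^ (1/p)) ^ (q-p) = (2*ν) ^ (q/p - 1) := by
          rw [← Real.rpow_mul (by positivity)]
          congr 1
          field_simp
        rw [h1]
        calc |Δs e| ^ p * |Δs e| ^ (q-p)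
            ≤ |Δs e| ^ p * (2*ν) ^ (q/p - 1) := by
              apply mul_le_mul_of_nonneg_left _ (Real.rpow_nonneg (abs_nonneg _) _)
              rw [← h3]; exact h2
          _ = (2*ν) ^ (q/p - 1) * |Δs e| ^ p := mul_comm _ _
    have hsqnn : (0:ℝ) ≤ s ^ q := by rw [hsq]; positivity
    have e1 : (2*ν) ^ (q/p - 1) = (2:ℝ) ^ (q/p - 1) * ν ^ (q/p - 1) :=
      Real.mul_rpow (by norm_num) hν.le
    have e2 : s ^ q * (2:ℝ) ^ (q/p - 1) = 1/2 := by
      rw [hsq, ← Real.rpow_add two_pos,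
        show -(q/p) + (q/p - 1) = -1 by ring, Real.rpow_neg_one]
      norm_num
    have e3 : ν ^ (1 - q/p) * ν ^ (q/p - 1) = 1 := by
      rw [← Real.rpow_add hν, show (1 - q/p) + (q/p - 1) = 0 by ring, Real.rpow_zero]
    have hbound : (ν ^ (1 - q/p) / 4) * (s ^ q * Q) ≤ P/8 := by
      have hstep : (ν ^ (1 - q/p) / 4) * (s ^ q * Q)
          ≤ (ν ^ (1 - q/p) / 4) * (s ^ q * ((2*ν) ^ (q/p - 1) * P)) := by
        apply mul_le_mul_of_nonneg_left _ hc0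
        exact mul_le_mul_of_nonneg_left hQP hsqnn
      refine hstep.trans (le_of_eq ?_)
      rw [e1]
      calc (ν ^ (1 - q/p) / 4) * (s ^ q * ((2:ℝ) ^ (q/p-1) * ν ^ (q/p-1) * P))
          = (ν ^ (1 - q/p) * ν ^ (q/p-1)) * (s ^ q * (2:ℝ) ^ (q/p-1)) * P / 4 := by
            ring
        _ = P/8 := by rw [e2, e3]; ring
    have f1 : (1/2) * (ν/2) ≤ s * (G - 2*R - P) :=
      mul_le_mul hshalf hlo.le (by linarith) hs0.le
    have hs2R : s * s * R ≤ s * R :=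
      mul_le_mul_of_nonneg_right (mul_le_of_le_one_left hs0.le hs1) hR
    have hsP : 1/2 * P ≤ s * P := mul_le_mul_of_nonneg_right hshalf hP
    linarith only [f1, hbound, hs2R, hsP, hP]
  · -- Part (ii)
    intro Δt hAt hle
    obtain ⟨Gt, hGtdef⟩ : ∃ x : ℝ, x = ∑ e, g e * Δt e := ⟨_, rfl⟩
    obtain ⟨Rt, hRtdef⟩ : ∃ x : ℝ, x = ∑ e, r e * Δt e ^ 2 := ⟨_, rfl⟩
    obtain ⟨Pt, hPtdef⟩ : ∃ x : ℝ, x = ∑ e, |Δt e| ^ p := ⟨_, rfl⟩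
    obtain ⟨Qt, hQtdef⟩ : ∃ x : ℝ, x = ∑ e, |Δt e| ^ q := ⟨_, rfl⟩
    rw [← hGtdef, ← hRtdef, ← hQtdef] at hle
    have hRt : 0 ≤ Rt := by
      rw [hRtdef]; exact Finset.sum_nonneg fun e _ => mul_nonneg (hr e) (sq_nonneg _)
    have hPt : 0 ≤ Pt := by
      rw [hPtdef]; exact Finset.sum_nonneg fun e _ => Real.rpow_nonneg (abs_nonneg _) _
    have hQt : 0 ≤ Qt := by
      rw [hQtdef]; exact Finset.sum_nonneg fun e _ => Real.rpow_nonneg (abs_nonneg _) _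
    have hm1 : (1:ℝ) ≤ (m:ℝ) := by exact_mod_cast hm
    have hexpnn : (0:ℝ) ≤ 1 - p/q := by
      have : p/q ≤ 1 := div_le_one_of_le₀ hpq hq0.le
      linarith
    obtain ⟨M, hMdef⟩ : ∃ x : ℝ, x = (m:ℝ) ^ (1 - p/q) := ⟨_, rfl⟩
    have hM1 : (1:ℝ) ≤ M := by rw [hMdef]; exact Real.one_le_rpow hm1 hexpnn
    have hM0 : (0:ℝ) < M := by linarith
    obtain ⟨t, htdef⟩ : ∃ x : ℝ, x = ((32:ℝ) * M) ^ (-(1/(p-1))) := ⟨_, rfl⟩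
    have hbase1 : (1:ℝ) ≤ 32 * M := by linarith
    have hbase0 : (0:ℝ) < 32 * M := by linarith
    have ht0 : 0 < t := by rw [htdef]; exact Real.rpow_pos_of_pos hbase0 _
    have hp1 : (1:ℝ) ≤ p - 1 := by linarith
    have hp1' : (0:ℝ) < p - 1 := by linarith
    have ht1 : t ≤ 1 := by
      rw [htdef]
      exact Real.rpow_le_one_of_one_le_of_nonpos hbase1 (by rw [neg_nonpos]; positivity)
    have htp1 : t ^ (p-1) = 1/(32*M) := by
      rw [htdef, ← Real.rpow_mul hbase0.le,
        show -(1/(p-1)) * (p-1) = -1 by field_simp, Real.rpow_neg_one, one_div]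
    -- Hölder
    have hHold : Pt ≤ M * Qt ^ (p/q) := by
      rw [hPtdef, hQtdef, hMdef]
      exact aux_holder hp0 hpq Δt
    have hkey : Qt ^ (p/q) ≤ ν + ν ^ (1 - q/p) * Qt := aux_key hν hQt hp0 hpq
    have hA3 : t ^ (p-1) * Pt ≤ ν/32 + (ν ^ (1 - q/p) / 4) * Qt / 2 := by
      have h1 : t ^ (p-1) * Pt ≤ (1/(32*M)) * (M * Qt ^ (p/q)) := by
        rw [htp1]
        apply mul_le_mul_of_nonneg_left hHold
        positivity
      have h2 : (1/(32*M)) * (M * Qt ^ (p/q)) = Qt ^ (p/q) / 32 := by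
        field_simp
      rw [h2] at h1
      have h3 : Qt ^ (p/q) / 32 ≤ ν/32 + ν ^ (1 - q/p) * Qt / 32 := by linarith
      have h4 : ν ^ (1 - q/p) * Qt / 32 ≤ (ν ^ (1 - q/p) / 4) * Qt / 2 := by
        have h5 := mul_nonneg (Real.rpow_nonneg hν.le (1 - q/p)) hQt
        linarith
      linarith
    have hA2 : t ^ p = t * t ^ (p-1) := by
      have h := Real.rpow_add ht0 1 (p-1)
      rw [Real.rpow_one] at h
      calc t ^ p = t ^ ((1:ℝ) + (p-1)) := by ring_nf
        _ = t * t ^ (p-1) := h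
    -- lower bound on t
    have htlow : (1/32) * (m:ℝ) ^ (-(p/(p-1)) * (1/p - 1/q)) ≤ t := by
      have hsplit : t = (32:ℝ) ^ (-(1/(p-1))) * M ^ (-(1/(p-1))) := by
        rw [htdef, Real.mul_rpow (by norm_num) hM0.le]
      have h1 : (1/32 : ℝ) ≤ (32:ℝ) ^ (-(1/(p-1))) := by
        have h2 : (32:ℝ) ^ (-(1:ℝ)) ≤ (32:ℝ) ^ (-(1/(p-1))) := by
          apply Real.rpow_le_rpow_of_exponent_le (by norm_num)
          have : 1/(p-1) ≤ 1 := by rw [div_le_one hp1']; linarith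
          linarith
        rw [Real.rpow_neg_one] at h2
        linarith [h2]
      have hexpeq : (1 - p/q) * (-(1/(p-1))) = -(p/(p-1)) * (1/p - 1/q) := by
        field_simp
      have h3 : M ^ (-(1/(p-1))) = (m:ℝ) ^ (-(p/(p-1)) * (1/p - 1/q)) := by
        rw [hMdef, ← Real.rpow_mul (by positivity), hexpeq]
      rw [hsplit, h3]
      exact mul_le_mul_of_nonneg_right h1 (Real.rpow_nonneg (by positivity) _)
    refine ⟨-t, ?_⟩
    rw [res_scale, ← hGtdef, ← hRtdef, ← hPtdef, abs_neg, abs_of_pos ht0]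
    have hB3 : t ^ p * Pt ≤ t * (ν/32 + (ν ^ (1 - q/p) / 4) * Qt / 2) := by
      calc t ^ p * Pt = t * (t ^ (p-1) * Pt) := by rw [hA2]; ring
        _ ≤ t * (ν/32 + (ν ^ (1 - q/p) / 4) * Qt / 2) :=
            mul_le_mul_of_nonneg_left hA3 ht0.le
    have hB1 : t * (ν/16 + 2*Rt + (ν ^ (1 - q/p) / 4) * Qt) ≤ t * (-Gt) := by
      apply mul_le_mul_of_nonneg_left _ ht0.le
      linarith
    have hB2 : t * t * Rt ≤ t * Rt :=
      mul_le_mul_of_nonneg_right (mul_le_of_le_one_left ht0.le ht1) hRt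
    have hB4 : 0 ≤ t * ((ν ^ (1 - q/p) / 4) * Qt) :=
      mul_nonneg ht0.le (mul_nonneg hc0 hQt)
    have hfin : t * (ν/32) ≤ -t * Gt - 2 * (-t)^2 * Rt - t ^ p * Pt := by
      linarith only [hB1, hB2, hB3, hB4]
    have hlast : 1 / 16384 * ν * (m:ℝ) ^ (-(p/(p-1)) * (1/p - 1/q)) ≤ t * (ν/32) := by
      have hmnn : (0:ℝ) ≤ (m:ℝ) ^ (-(p/(p-1)) * (1/p - 1/q)) :=
        Real.rpow_nonneg (by positivity) _
      linarith only [mul_le_mul_of_nonneg_right htlow hν.le, mul_nonneg hν.le hmnn]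
    linarith [hfin, hlast]
end

section
/- Let p ≥ 2 be real, A ∈ ℝ^{n×m}, g ∈ ℝ^m, r ∈ ℝ^m with nonnegative entries, ν > 0, and α, β ≥ 1. Suppose Δ* maximizes res_p over {Δ : AΔ = 0} with res_p(Δ*) ∈ (ν/2, ν]. Then: (i) the ℓ_p-constrained problem max{g^⊤Δ − 2∑_e r_e Δ_e² : AΔ = 0, ‖Δ‖_p^p ≤ ν} has optimal value at least ν/2; and (ii) if Δ̃ satisfies AΔ̃ = 0, ‖Δ̃‖_p^p ≤ βν, and g^⊤Δ̃ − 2∑_e r_e Δ̃_e² is at least (1/α) times the optimal value of the ℓ_p-constrained problem, then Δ = (4αβ)^{−1/(p−1)}·Δ̃ satisfies res_p(Δ) ≥ res_p(Δ*) / (16(α^p β)^{1/(p−1)}). -/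
lemma res_smul {m : ℕ} (g r : Fin m → ℝ) (p : ℝ) (Δ : Fin m → ℝ) {t : ℝ} (ht : 0 ≤ t) :
    res g r p (fun e => t * Δ e)
      = t * (∑ e, g e * Δ e) - 2 * t ^ 2 * (∑ e, r e * Δ e ^ 2)
        - t ^ p * ∑ e, |Δ e| ^ p := by
  have e1 : (∑ e, g e * (t * Δ e)) = t * ∑ e, g e * Δ e := by
    rw [Finset.mul_sum]; exact Finset.sum_congr rfl (fun e _ => by ring)
  have e2 : (∑ e, r e * (t * Δ e) ^ 2) = t ^ 2 * ∑ e, r e * Δ e ^ 2 := by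
    rw [Finset.mul_sum]; exact Finset.sum_congr rfl (fun e _ => by ring)
  have e3 : (∑ e, |t * Δ e| ^ p) = t ^ p * ∑ e, |Δ e| ^ p := by
    rw [Finset.mul_sum]
    exact Finset.sum_congr rfl fun e _ => by
      rw [abs_mul, abs_of_nonneg ht, Real.mul_rpow ht (abs_nonneg _)]
  simp only [res, e1, e2, e3]
  ring

set_option maxHeartbeats 1000000 in
/-- Lemma 6.2, lpBox.  The optimal value of the ℓ_p-constrained
problem is formalized as the supremum of its objective values over feasible points. -/
theorem stmt_15 {n m : ℕ} {p : ℝ} (hp : 2 ≤ p)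
    (A : Matrix (Fin n) (Fin m) ℝ) (g r : Fin m → ℝ) (hr : ∀ e, 0 ≤ r e)
    {ν α β : ℝ} (hν : 0 < ν) (hα : 1 ≤ α) (hβ : 1 ≤ β)
    (Δs : Fin m → ℝ) (hAs : A.mulVec Δs = 0)
    (hmax : ∀ Δ, A.mulVec Δ = 0 → res g r p Δ ≤ res g r p Δs)
    (hlo : ν / 2 < res g r p Δs) (hhi : res g r p Δs ≤ ν) :
    ν / 2 ≤ sSup {y | ∃ Δ : Fin m → ℝ, A.mulVec Δ = 0 ∧ (∑ e, |Δ e| ^ p) ≤ ν ∧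
        y = (∑ e, g e * Δ e) - 2 * (∑ e, r e * Δ e ^ 2)} ∧
      ∀ Δt : Fin m → ℝ, A.mulVec Δt = 0 → (∑ e, |Δt e| ^ p) ≤ β * ν →
        1 / α * sSup {y | ∃ Δ : Fin m → ℝ, A.mulVec Δ = 0 ∧ (∑ e, |Δ e| ^ p) ≤ ν ∧
            y = (∑ e, g e * Δ e) - 2 * (∑ e, r e * Δ e ^ 2)}
          ≤ (∑ e, g e * Δt e) - 2 * (∑ e, r e * Δt e ^ 2) →
        res g r p (fun e => (4 * α * β) ^ (-(1 / (p - 1))) * Δt e)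
          ≥ res g r p Δs / (16 * (α ^ p * β) ^ (1 / (p - 1))) := by
  have hα0 : (0:ℝ) < α := by linarith
  have hβ0 : (0:ℝ) < β := by linarith
  have hp1 : (0:ℝ) < p - 1 := by linarith
  have hPnn : ∀ Δ : Fin m → ℝ, 0 ≤ ∑ e, |Δ e| ^ p := fun Δ =>
    Finset.sum_nonneg fun e _ => Real.rpow_nonneg (abs_nonneg _) _
  have hQnn : ∀ Δ : Fin m → ℝ, 0 ≤ ∑ e, r e * Δ e ^ 2 := fun Δ =>
    Finset.sum_nonneg fun e _ => mul_nonneg (hr e) (sq_nonneg _)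
  have hker : ∀ (t : ℝ) (Δ : Fin m → ℝ), A.mulVec Δ = 0 →
      A.mulVec (fun e => t * Δ e) = 0 := by
    intro t Δ hA
    have h : (fun e => t * Δ e) = t • Δ := rfl
    rw [h, Matrix.mulVec_smul, hA, smul_zero]
  have hRs : res g r p Δs
      = (∑ e, g e * Δs e) - 2 * (∑ e, r e * Δs e ^ 2) - ∑ e, |Δs e| ^ p := rfl
  -- key scaling inequality at the optimum
  have key : ∀ t : ℝ, 0 < t → t < 1 →
      t * (∑ e, |Δs e| ^ p) ≤ res g r p Δs := by
    intro t ht0 ht1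
    have h := hmax _ (hker t Δs hAs)
    rw [res_smul g r p Δs ht0.le] at h
    have htp : t ^ p ≤ t ^ (2:ℝ) := Real.rpow_le_rpow_of_exponent_ge ht0 ht1.le hp
    have ht2 : t ^ (2:ℝ) = t ^ (2:ℕ) := by
      rw [show (2:ℝ) = ((2:ℕ):ℝ) by norm_num, Real.rpow_natCast]
    rw [ht2] at htp
    rw [hRs] at h ⊢
    set L := ∑ e, g e * Δs e
    set Q := ∑ e, r e * Δs e ^ 2
    set P := ∑ e, |Δs e| ^ p
    have hQ := hQnn Δs
    have hP := hPnn Δs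
    have h2 : t * L - 2 * t ^ 2 * Q - t ^ 2 * P ≤ L - 2 * Q - P := by
      nlinarith [mul_le_mul_of_nonneg_right htp hP]
    nlinarith [mul_pos ht0 (sub_pos.2 ht1), mul_nonneg (mul_nonneg ht0.le (sub_pos.2 ht1).le) hQ,
      mul_nonneg (mul_nonneg ht0.le (sub_pos.2 ht1).le) hP]
  have hres0 : 0 < res g r p Δs := by linarith
  -- ‖Δs‖_p^p ≤ res(Δs)
  have hPle : (∑ e, |Δs e| ^ p) ≤ res g r p Δs := by
    by_contra hcon
    push_neg at hcon
    set R := res g r p Δs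
    set P := ∑ e, |Δs e| ^ p
    have hP0 : 0 < P := lt_trans hres0 hcon
    have ht0 : 0 < (R + P) / (2 * P) := by positivity
    have ht1 : (R + P) / (2 * P) < 1 := by
      rw [div_lt_one (by positivity)]; linarith
    have h := key _ ht0 ht1
    rw [div_mul_eq_mul_div, div_le_iff₀ (by positivity)] at h
    nlinarith
  -- bounded above
  have hbdd : BddAbove {y | ∃ Δ : Fin m → ℝ, A.mulVec Δ = 0 ∧ (∑ e, |Δ e| ^ p) ≤ ν ∧
      y = (∑ e, g e * Δ e) - 2 * (∑ e, r e * Δ e ^ 2)} := by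
    refine ⟨res g r p Δs + ν, ?_⟩
    rintro y ⟨Δ, hA, hPle', rfl⟩
    have h := hmax Δ hA
    have hdef : res g r p Δ
        = (∑ e, g e * Δ e) - 2 * (∑ e, r e * Δ e ^ 2) - ∑ e, |Δ e| ^ p := rfl
    linarith
  have hmem : ((∑ e, g e * Δs e) - 2 * (∑ e, r e * Δs e ^ 2)) ∈
      {y | ∃ Δ : Fin m → ℝ, A.mulVec Δ = 0 ∧ (∑ e, |Δ e| ^ p) ≤ ν ∧
        y = (∑ e, g e * Δ e) - 2 * (∑ e, r e * Δ e ^ 2)} :=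
    ⟨Δs, hAs, le_trans hPle hhi, rfl⟩
  have hpart1 : ν / 2 ≤ sSup {y | ∃ Δ : Fin m → ℝ, A.mulVec Δ = 0 ∧ (∑ e, |Δ e| ^ p) ≤ ν ∧
      y = (∑ e, g e * Δ e) - 2 * (∑ e, r e * Δ e ^ 2)} := by
    have h := le_csSup hbdd hmem
    have hP := hPnn Δs
    rw [hRs] at hlo
    linarith
  refine ⟨hpart1, ?_⟩
  intro Δt hAt hPt hobj
  set s : ℝ := 1 / (p - 1) with hs
  have hs0 : 0 < s := by positivity
  have hs1 : s ≤ 1 := by rw [hs, div_le_one hp1]; linarith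
  have hsp : s * (p - 1) = 1 := by rw [hs]; field_simp
  set c : ℝ := 4 * α * β with hc
  have hc0 : (0:ℝ) < c := by rw [hc]; positivity
  have hc4 : (4:ℝ) ≤ c := by rw [hc]; nlinarith
  set lam : ℝ := c ^ (-s) with hlam
  have hlam0 : 0 < lam := Real.rpow_pos_of_pos hc0 _
  have hlam1 : lam ≤ 1 := Real.rpow_le_one_of_one_le_of_nonpos (by linarith) (by linarith)
  have hlamsq : lam ^ 2 ≤ lam := by nlinarith
  have hlamp : lam ^ p = lam * c⁻¹ := by
    rw [hlam, ← Real.rpow_mul hc0.le,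
      show -s * p = -s + (-1) by linear_combination -hsp,
      Real.rpow_add hc0, Real.rpow_neg_one]
  have hQt := hQnn Δt
  have hPtnn := hPnn Δt
  -- objective lower bound, denominator-free
  have hobjt : ν ≤ 2 * α * ((∑ e, g e * Δt e) - 2 * ∑ e, r e * Δt e ^ 2) := by
    have h1 : 1 / α * (ν / 2) ≤ 1 / α * sSup {y | ∃ Δ : Fin m → ℝ, A.mulVec Δ = 0 ∧
        (∑ e, |Δ e| ^ p) ≤ ν ∧ y = (∑ e, g e * Δ e) - 2 * (∑ e, r e * Δ e ^ 2)} :=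
      mul_le_mul_of_nonneg_left hpart1 (by positivity)
    have h2 := le_trans h1 hobj
    rw [div_mul_eq_mul_div, one_mul, div_le_iff₀ hα0] at h2
    linarith
  -- penalty upper bound, denominator-free
  have hpen : 4 * α * (lam ^ p * ∑ e, |Δt e| ^ p) ≤ lam * ν := by
    have h1 : lam ^ p * (∑ e, |Δt e| ^ p) ≤ lam ^ p * (β * ν) :=
      mul_le_mul_of_nonneg_left hPt (by positivity)
    have h2 : 4 * α * (lam ^ p * (β * ν)) = lam * ν := by
      rw [hlamp, hc]
      field_simp
    nlinarith
  set E : ℝ := lam * (∑ e, g e * Δt e) - 2 * lam ^ 2 * (∑ e, r e * Δt e ^ 2)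
      - lam ^ p * ∑ e, |Δt e| ^ p with hE
  have hres_lb : lam * ν ≤ 4 * α * E := by
    have h1 := mul_le_mul_of_nonneg_left hobjt hlam0.le
    have h2 : 0 ≤ α * ((lam - lam ^ 2) * ∑ e, r e * Δt e ^ 2) := by
      apply mul_nonneg hα0.le (mul_nonneg (by linarith) hQt)
    rw [hE]
    linarith [h1, h2, hpen]
  -- rpow algebra for the final comparison
  have hcs : c ^ s = 4 ^ s * α ^ s * β ^ s := by
    rw [hc, Real.mul_rpow (by positivity) hβ0.le, Real.mul_rpow (by norm_num) hα0.le]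
  have hDval : (α ^ p * β) ^ s = α * α ^ s * β ^ s := by
    rw [Real.mul_rpow (Real.rpow_nonneg hα0.le p) hβ0.le, ← Real.rpow_mul hα0.le,
      show p * s = 1 + s by linear_combination hsp, Real.rpow_add hα0, Real.rpow_one]
  have hlamval : lam = (4 ^ s * α ^ s * β ^ s)⁻¹ := by
    rw [hlam, Real.rpow_neg hc0.le, hcs]
  have h4s : (4:ℝ) ^ s ≤ 4 := by
    calc (4:ℝ) ^ s ≤ 4 ^ (1:ℝ) := Real.rpow_le_rpow_of_exponent_le (by norm_num) hs1
      _ = 4 := Real.rpow_one 4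
  have hαs0 : 0 < α ^ s := Real.rpow_pos_of_pos hα0 s
  have hβs0 : 0 < β ^ s := Real.rpow_pos_of_pos hβ0 s
  have h4s0 : (0:ℝ) < 4 ^ s := Real.rpow_pos_of_pos (by norm_num) s
  have hkey2 : 4 * α ≤ lam * (16 * (α ^ p * β) ^ s) := by
    rw [hlamval, hDval, inv_mul_eq_div, le_div_iff₀ (by positivity)]
    nlinarith [mul_le_mul_of_nonneg_right h4s
      (by positivity : (0:ℝ) ≤ α * α ^ s * β ^ s)]
  have hD0 : 0 < 16 * (α ^ p * β) ^ s := by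
    have := Real.rpow_pos_of_pos (mul_pos (Real.rpow_pos_of_pos hα0 p) hβ0) s
    positivity
  rw [ge_iff_le, res_smul g r p Δt hlam0.le, ← hE, div_le_iff₀ hD0]
  have hEb : lam * ν / (4 * α) ≤ E := by
    rw [div_le_iff₀ (by positivity)]
    linarith
  have hνD : ν ≤ lam * ν / (4 * α) * (16 * (α ^ p * β) ^ s) := by
    rw [div_mul_eq_mul_div, le_div_iff₀ (by positivity)]
    nlinarith [mul_le_mul_of_nonneg_left hkey2 hν.le]
  have hfin := mul_le_mul_of_nonneg_right hEb hD0.le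
  exact hhi.trans (hνD.trans hfin)
end
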